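/- arXiv:1909.06626 — 3 statements merged into one kernel-verified Lean document; each statement's English description precedes it below -/
import Mathlib

section
/- For probability measures u and v on an interval Ω ⊆ ℝ with finite second moments, the L²-Wasserstein distance satisfies W₂(u,v) = ‖icdf_u − icdf_v‖_{L²([0,1])}, where icdf_u is the generalized inverse (quantile function) of the cumulative distribution function of u. -/
open MeasureTheory Set
set_option linter.unusedSectionVars false

/-- Cumulative distribution function of a measure on ℝ. -/
noncomputable def cdf' (μ : Measure ℝ) (x : ℝ) : ℝ := (μ (Iic x)).toReal

/-- Generalized inverse of the cdf (quantile function): icdf_μ(s) = inf{x : cdf_μ(x) > s}. -/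
noncomputable def icdf (μ : Measure ℝ) (s : ℝ) : ℝ := sInf {x | s < cdf' μ x}

section basic

variable {μ : Measure ℝ} [IsProbabilityMeasure μ] {xmin xmax : ℝ}

lemma cdf'_eq_cdf (x : ℝ) : cdf' μ x = ProbabilityTheory.cdf μ x :=
  (ProbabilityTheory.cdf_eq_real μ x).symm

lemma cdf'_mono : Monotone (cdf' μ) := by
  simp only [funext (cdf'_eq_cdf (μ := μ))]
  exact ProbabilityTheory.monotone_cdf μ

lemma cdf'_nonneg (x : ℝ) : 0 ≤ cdf' μ x := ENNReal.toReal_nonneg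

lemma cdf'_le_one (x : ℝ) : cdf' μ x ≤ 1 := by
  rw [cdf'_eq_cdf]; exact ProbabilityTheory.cdf_le_one μ x

lemma cdf'_zero_of_lt (huΩ : ∀ᵐ x ∂μ, x ∈ Icc xmin xmax) {x : ℝ} (hx : x < xmin) :
    cdf' μ x = 0 := by
  have : μ (Iic x) = 0 := by
    refine measure_mono_null (fun y hy => ?_) (ae_iff.mp huΩ)
    simp only [mem_Iic] at hy
    simp only [mem_setOf_eq, mem_Icc, not_and_or, not_le]
    exact Or.inl (lt_of_le_of_lt hy hx)
  simp [cdf', this]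

lemma cdf'_one_of_le (huΩ : ∀ᵐ x ∂μ, x ∈ Icc xmin xmax) {x : ℝ} (hx : xmax ≤ x) :
    cdf' μ x = 1 := by
  have h1 : μ (Iic x) = 1 := by
    refine le_antisymm prob_le_one ?_
    have : μ (Icc xmin xmax) = 1 := by
      rw [← prob_compl_eq_zero_iff (by measurability)] at *
      exact ae_iff.mp huΩ
    calc (1 : ENNReal) = μ (Icc xmin xmax) := this.symm
    _ ≤ μ (Iic x) := measure_mono (fun y hy => le_trans hy.2 hx)
  simp [cdf', h1]

lemma icdf_le_of_lt_cdf {s x : ℝ} (huΩ : ∀ᵐ x ∂μ, x ∈ Icc xmin xmax)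
    (hs : 0 < s) (h : s < cdf' μ x) : icdf μ s ≤ x := by
  refine csInf_le ⟨xmin, fun y hy => ?_⟩ h
  by_contra hy'
  push_neg at hy'
  simp only [mem_setOf_eq, cdf'_zero_of_lt huΩ hy'] at hy
  exact absurd hy (not_lt.mpr hs.le)

lemma le_cdf_of_icdf_le {s x : ℝ} (huΩ : ∀ᵐ x ∂μ, x ∈ Icc xmin xmax)
    (hs : s < 1) (h : icdf μ s ≤ x) : s ≤ cdf' μ x := by
  by_contra hc
  push_neg at hc
  -- right continuity gives δ > 0 with cdf' μ (x + δ) < s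
  have hrc : Filter.Tendsto (ProbabilityTheory.cdf μ) (nhdsWithin x (Ici x))
      (nhds (ProbabilityTheory.cdf μ x)) := (ProbabilityTheory.cdf μ).right_continuous x
  have hlt : (ProbabilityTheory.cdf μ) x < s := by rwa [← cdf'_eq_cdf]
  have hev : ∀ᶠ y in nhdsWithin x (Ici x), ProbabilityTheory.cdf μ y < s :=
    hrc (Iio_mem_nhds hlt)
  rw [eventually_nhdsWithin_iff] at hev
  obtain ⟨ε, hε, hball⟩ := Metric.eventually_nhds_iff.mp hev
  set δ := ε / 2 with hδ
  have hδpos : 0 < δ := by positivity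
  have hcd : cdf' μ (x + δ) < s := by
    rw [cdf'_eq_cdf]
    refine hball (y := x + δ) ?_ (by simp [le_of_lt hδpos])
    simp only [Real.dist_eq, add_sub_cancel_left, abs_of_pos hδpos]
    linarith
  -- then x + δ is a lower bound for the set
  have hlb : x + δ ≤ icdf μ s := by
    refine le_csInf ⟨xmax, ?_⟩ (fun y hy => ?_)
    · simpa [mem_setOf_eq, cdf'_one_of_le huΩ le_rfl] using hs
    · by_contra hy'
      push_neg at hy'
      exact absurd (lt_of_lt_of_le hy (cdf'_mono hy'.le)) (not_lt.mpr hcd.le)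
  linarith

lemma icdf_mem_Icc {s : ℝ} (huΩ : ∀ᵐ x ∂μ, x ∈ Icc xmin xmax)
    (hs0 : 0 ≤ s) (hs1 : s < 1) : icdf μ s ∈ Icc xmin xmax := by
  constructor
  · refine le_csInf ⟨xmax, ?_⟩ (fun y hy => ?_)
    · simpa [mem_setOf_eq, cdf'_one_of_le huΩ le_rfl] using hs1
    · by_contra hy'
      push_neg at hy'
      rw [mem_setOf_eq, cdf'_zero_of_lt huΩ hy'] at hy
      exact absurd hy (not_lt.mpr hs0)
  · refine csInf_le ⟨xmin, fun y hy => ?_⟩ ?_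
    · by_contra hy'
      push_neg at hy'
      rw [mem_setOf_eq, cdf'_zero_of_lt huΩ hy'] at hy
      exact absurd (lt_of_le_of_lt hs0 hy) (lt_irrefl 0)
    · simpa [mem_setOf_eq, cdf'_one_of_le huΩ le_rfl] using hs1

end basic

noncomputable def icdfExt (μ : Measure ℝ) (xmax : ℝ) (s : ℝ) : ℝ :=
  if s < 1 then icdf μ (max s 0) else xmax

section ext

variable {μ : Measure ℝ} [IsProbabilityMeasure μ] {xmin xmax : ℝ}

lemma icdfExt_mono (huΩ : ∀ᵐ x ∂μ, x ∈ Icc xmin xmax) : Monotone (icdfExt μ xmax) := by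
  intro s₁ s₂ h
  unfold icdfExt
  by_cases h1 : s₁ < 1
  · by_cases h2 : s₂ < 1
    · rw [if_pos h1, if_pos h2]
      refine csInf_le_csInf ⟨xmin, fun y hy => ?_⟩ ⟨xmax, ?_⟩ (fun y hy => ?_)
      · by_contra hy'
        push_neg at hy'
        simp only [mem_setOf_eq, cdf'_zero_of_lt huΩ hy'] at hy
        exact absurd (lt_of_le_of_lt (le_max_right s₁ 0) hy) (lt_irrefl 0)
      · simp only [mem_setOf_eq, cdf'_one_of_le huΩ le_rfl]
        exact max_lt h2 one_pos
      · exact lt_of_le_of_lt (max_le_max h le_rfl) hy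
    · rw [if_pos h1, if_neg h2]
      exact (icdf_mem_Icc huΩ (le_max_right s₁ 0) (max_lt h1 one_pos)).2
  · have h2 : ¬ s₂ < 1 := fun h2 => h1 (lt_of_le_of_lt h h2)
    rw [if_neg h1, if_neg h2]

lemma icdfExt_eq {s : ℝ} (hs : s ∈ Ioo (0:ℝ) 1) : icdfExt μ xmax s = icdf μ s := by
  rw [icdfExt, if_pos hs.2, max_eq_left hs.1.le]

lemma icdf_aeeq : icdf μ =ᵐ[volume.restrict (Ioo (0:ℝ) 1)] icdfExt μ xmax := by
  filter_upwards [ae_restrict_mem measurableSet_Ioo] with s hs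
  exact (icdfExt_eq hs).symm

lemma map_icdf (hx : xmin < xmax) (huΩ : ∀ᵐ x ∂μ, x ∈ Icc xmin xmax) :
    (volume.restrict (Ioo (0:ℝ) 1)).map (icdf μ) = μ := by
  have hgm : Measurable (icdfExt μ xmax) := (icdfExt_mono huΩ).measurable
  rw [Measure.map_congr (icdf_aeeq (xmax := xmax))]
  have hprob : IsProbabilityMeasure ((volume.restrict (Ioo (0:ℝ) 1)).map (icdfExt μ xmax)) := by
    constructor
    rw [Measure.map_apply hgm MeasurableSet.univ]
    simp [Measure.restrict_apply, Real.volume_Ioo]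
  refine Measure.ext_of_Iic _ μ (fun x => ?_)
  rw [Measure.map_apply hgm measurableSet_Iic,
    Measure.restrict_apply (hgm measurableSet_Iic)]
  set c := cdf' μ x with hc
  have hc0 : 0 ≤ c := cdf'_nonneg x
  have hc1 : c ≤ 1 := cdf'_le_one x
  have hsub1 : Ioo 0 c ⊆ icdfExt μ xmax ⁻¹' Iic x ∩ Ioo 0 1 := by
    intro σ hσ
    have hσ1 : σ ∈ Ioo (0:ℝ) 1 := ⟨hσ.1, lt_of_lt_of_le hσ.2 hc1⟩
    refine ⟨?_, hσ1⟩
    simp only [mem_preimage, mem_Iic, icdfExt_eq hσ1]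
    exact icdf_le_of_lt_cdf huΩ hσ.1 hσ.2
  have hsub2 : icdfExt μ xmax ⁻¹' Iic x ∩ Ioo 0 1 ⊆ Ioc 0 c := by
    intro σ ⟨hσx, hσ1⟩
    simp only [mem_preimage, mem_Iic, icdfExt_eq hσ1] at hσx
    exact ⟨hσ1.1, le_cdf_of_icdf_le huΩ hσ1.2 hσx⟩
  have hval : volume (icdfExt μ xmax ⁻¹' Iic x ∩ Ioo 0 1) = ENNReal.ofReal c := by
    refine le_antisymm (le_trans (measure_mono hsub2) ?_) (le_trans ?_ (measure_mono hsub1))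
    · simp [Real.volume_Ioc]
    · simp [Real.volume_Ioo]
  rw [hval, hc, cdf']
  exact ENNReal.ofReal_toReal (measure_ne_top μ _)

end ext

noncomputable def phi (s a : ℝ) : ℝ := (if s < a then 1 else 0) - (if s < 0 then 1 else 0)

lemma measurable_phi : Measurable fun q : ℝ × ℝ => phi q.1 q.2 := by
  unfold phi
  exact Measurable.sub
    (Measurable.ite (measurableSet_lt measurable_fst measurable_snd)
      measurable_const measurable_const)
    (Measurable.ite (measurableSet_lt measurable_fst measurable_const)
      measurable_const measurable_const)

lemma phi_eq_indicator (a s : ℝ) :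
    phi s a = (Ico (0:ℝ) a).indicator 1 s - (Ico a (0:ℝ)).indicator 1 s := by
  unfold phi
  -- marker
  simp only [indicator, mem_Ico, Pi.one_apply]
  rcases lt_trichotomy s a with h | h | h <;> rcases lt_trichotomy s 0 with h' | h' | h' <;>
    split_ifs <;> simp_all <;> linarith

lemma phi_integrable (a : ℝ) : Integrable (fun s => phi s a) := by
  simp only [funext (phi_eq_indicator a)]
  refine Integrable.sub ?_ ?_ <;>
  · rw [integrable_indicator_iff measurableSet_Ico]
    exact integrableOn_const measure_Ico_lt_top.ne

lemma integral_phi (a : ℝ) : ∫ s, phi s a = a := by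
  simp only [funext (phi_eq_indicator a)]
  rw [integral_sub, integral_indicator_one measurableSet_Ico,
    integral_indicator_one measurableSet_Ico, Real.volume_real_Ico, Real.volume_real_Ico]
  · rcases le_or_gt 0 a with h | h
    · rw [max_eq_left (by linarith), max_eq_right (by linarith)]; ring
    · rw [max_eq_right (by linarith), max_eq_left (by linarith)]; ring
  all_goals
    rw [integrable_indicator_iff measurableSet_Ico]
    exact integrableOn_const measure_Ico_lt_top.ne

lemma phi_abs_le {m M a : ℝ} (hm : m ≤ 0) (hM : 0 ≤ M) (ha : a ∈ Icc m M) (s : ℝ) :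
    |phi s a| ≤ (Ico m M).indicator 1 s := by
  rw [phi_eq_indicator]
  have key1 : (0:ℝ) ≤ s → s < a → (m ≤ s ∧ s < M) :=
    fun h1 h2 => ⟨le_trans hm h1, lt_of_lt_of_le h2 ha.2⟩
  have key2 : a ≤ s → s < (0:ℝ) → (m ≤ s ∧ s < M) :=
    fun h1 h2 => ⟨le_trans ha.1 h1, lt_of_lt_of_le h2 hM⟩
  simp only [indicator, mem_Ico, Pi.one_apply]
  split_ifs with h1 h2 h3 h4 h5 h6 <;> simp_all <;>
    first
      | linarith [key1 h1.1 h1.2]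
      | linarith [(key1 h1.1 h1.2).1, (key1 h1.1 h1.2).2]
      | linarith [(key2 h1.1 h1.2).1, (key2 h1.1 h1.2).2]
      | linarith

section coupling

variable {u v : Measure ℝ} [IsProbabilityMeasure u] [IsProbabilityMeasure v] {xmin xmax : ℝ}

lemma coupling_ae_mem (ρ : Measure (ℝ × ℝ)) [IsProbabilityMeasure ρ]
    (hf : ρ.map Prod.fst = u) (hg : ρ.map Prod.snd = v)
    (huΩ : ∀ᵐ x ∂u, x ∈ Icc xmin xmax) (hvΩ : ∀ᵐ x ∂v, x ∈ Icc xmin xmax) :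
    ∀ᵐ p ∂ρ, p.1 ∈ Icc xmin xmax ∧ p.2 ∈ Icc xmin xmax := by
  have h1 : ∀ᵐ p ∂ρ, p.1 ∈ Icc xmin xmax := by
    rw [← hf] at huΩ
    exact (MeasureTheory.ae_map_iff measurable_fst.aemeasurable measurableSet_Icc).mp huΩ
  have h2 : ∀ᵐ p ∂ρ, p.2 ∈ Icc xmin xmax := by
    rw [← hg] at hvΩ
    exact (MeasureTheory.ae_map_iff measurable_snd.aemeasurable measurableSet_Icc).mp hvΩ
  exact h1.and h2

lemma integrable_ind {α : Type*} [MeasurableSpace α] {ρ : Measure α} [IsProbabilityMeasure ρ]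
    {A : Set α} (hA : MeasurableSet A) : Integrable (A.indicator (1 : α → ℝ)) ρ := by
  rw [integrable_indicator_iff hA]
  exact integrableOn_const (measure_lt_top _ _).ne

lemma H_eq (ρ : Measure (ℝ × ℝ)) [IsProbabilityMeasure ρ]
    (hf : ρ.map Prod.fst = u) (hg : ρ.map Prod.snd = v) (s t : ℝ) :
    ∫ p, phi s p.1 * phi t p.2 ∂ρ =
      (ρ (Ioi s ×ˢ Ioi t)).toReal
      - (if t < 0 then 1 else 0) * (u (Ioi s)).toReal
      - (if s < 0 then 1 else 0) * (v (Ioi t)).toReal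
      + (if s < 0 then 1 else 0) * (if t < 0 then (1:ℝ) else 0) := by
  set c := (if s < 0 then (1:ℝ) else 0) with hc
  set d := (if t < 0 then (1:ℝ) else 0) with hd
  have hpt : ∀ p : ℝ × ℝ, phi s p.1 * phi t p.2 =
      (Ioi s ×ˢ Ioi t).indicator 1 p - d * (Prod.fst ⁻¹' Ioi s).indicator 1 p
      - c * (Prod.snd ⁻¹' Ioi t).indicator 1 p + c * d := by
    intro p
    unfold phi
    rw [← hc, ← hd]
    simp only [indicator, mem_prod, mem_Ioi, mem_preimage, Pi.one_apply]
    by_cases h1 : s < p.1 <;> by_cases h2 : t < p.2 <;> simp [h1, h2] <;> ring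
  have i1 : Integrable ((Ioi s ×ˢ Ioi t).indicator (1 : ℝ × ℝ → ℝ)) ρ :=
    integrable_ind (measurableSet_Ioi.prod measurableSet_Ioi)
  have i2 : Integrable ((Prod.fst ⁻¹' Ioi s).indicator (1 : ℝ × ℝ → ℝ)) ρ :=
    integrable_ind (measurable_fst measurableSet_Ioi)
  have i3 : Integrable ((Prod.snd ⁻¹' Ioi t).indicator (1 : ℝ × ℝ → ℝ)) ρ :=
    integrable_ind (measurable_snd measurableSet_Ioi)
  have j2 : Integrable (fun p : ℝ × ℝ => (Ioi s ×ˢ Ioi t).indicator 1 p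
      - d * (Prod.fst ⁻¹' Ioi s).indicator 1 p) ρ := i1.sub (i2.const_mul d)
  have j1 : Integrable (fun p : ℝ × ℝ => (Ioi s ×ˢ Ioi t).indicator 1 p
      - d * (Prod.fst ⁻¹' Ioi s).indicator 1 p
      - c * (Prod.snd ⁻¹' Ioi t).indicator 1 p) ρ := j2.sub (i3.const_mul c)
  simp_rw [hpt]
  rw [integral_add j1 (integrable_const _),
    integral_sub j2 (i3.const_mul c),
    integral_sub i1 (i2.const_mul d), integral_const_mul, integral_const_mul,
    integral_indicator_one (measurableSet_Ioi.prod measurableSet_Ioi),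
    integral_indicator_one (measurable_fst measurableSet_Ioi),
    integral_indicator_one (measurable_snd measurableSet_Ioi), integral_const,
    probReal_univ, measureReal_def, measureReal_def, measureReal_def]
  have hfst : ρ (Prod.fst ⁻¹' Ioi s) = u (Ioi s) := by
    rw [← hf, Measure.map_apply measurable_fst measurableSet_Ioi]
  have hsnd : ρ (Prod.snd ⁻¹' Ioi t) = v (Ioi t) := by
    rw [← hg, Measure.map_apply measurable_snd measurableSet_Ioi]
  rw [hfst, hsnd]
  simp [mul_comm]

lemma coupling_prod_le (ρ : Measure (ℝ × ℝ))
    (hf : ρ.map Prod.fst = u) (hg : ρ.map Prod.snd = v) (s t : ℝ) :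
    ρ (Ioi s ×ˢ Ioi t) ≤ min (u (Ioi s)) (v (Ioi t)) := by
  refine le_min ?_ ?_
  · rw [← hf, Measure.map_apply measurable_fst measurableSet_Ioi]
    exact measure_mono (fun p hp => hp.1)
  · rw [← hg, Measure.map_apply measurable_snd measurableSet_Ioi]
    exact measure_mono (fun p hp => hp.2)

end coupling

noncomputable def pi0 (u v : Measure ℝ) (xmax : ℝ) : Measure (ℝ × ℝ) :=
  (volume.restrict (Ioo (0:ℝ) 1)).map (fun σ => (icdfExt u xmax σ, icdfExt v xmax σ))

section pi0

variable {u v : Measure ℝ} [IsProbabilityMeasure u] [IsProbabilityMeasure v] {xmin xmax : ℝ}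
variable (hx : xmin < xmax) (huΩ : ∀ᵐ x ∂u, x ∈ Icc xmin xmax)
  (hvΩ : ∀ᵐ x ∂v, x ∈ Icc xmin xmax)

include hx huΩ hvΩ

lemma pi0_pair_measurable : Measurable (fun σ => (icdfExt u xmax σ, icdfExt v xmax σ)) :=
  ((icdfExt_mono huΩ).measurable).prodMk ((icdfExt_mono hvΩ).measurable)

lemma pi0_fst : (pi0 u v xmax).map Prod.fst = u := by
  rw [pi0, Measure.map_map measurable_fst (pi0_pair_measurable hx huΩ hvΩ)]
  have : (Prod.fst ∘ fun σ => (icdfExt u xmax σ, icdfExt v xmax σ)) = icdfExt u xmax := rfl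
  rw [this, ← Measure.map_congr (icdf_aeeq (μ := u) (xmax := xmax)), map_icdf hx huΩ]

lemma pi0_snd : (pi0 u v xmax).map Prod.snd = v := by
  rw [pi0, Measure.map_map measurable_snd (pi0_pair_measurable hx huΩ hvΩ)]
  have : (Prod.snd ∘ fun σ => (icdfExt u xmax σ, icdfExt v xmax σ)) = icdfExt v xmax := rfl
  rw [this, ← Measure.map_congr (icdf_aeeq (μ := v) (xmax := xmax)), map_icdf hx hvΩ]

instance : IsProbabilityMeasure (volume.restrict (Ioo (0:ℝ) 1)) := by
  constructor
  simp [Measure.restrict_apply, Real.volume_Ioo]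

lemma pi0_prob : IsProbabilityMeasure (pi0 u v xmax) := by
  rw [pi0]
  exact MeasureTheory.Measure.isProbabilityMeasure_map (pi0_pair_measurable hx huΩ hvΩ).aemeasurable

lemma pi0_prod_eq (s t : ℝ) :
    pi0 u v xmax (Ioi s ×ˢ Ioi t) = min (u (Ioi s)) (v (Ioi t)) := by
  set a := cdf' u s with ha
  set b := cdf' v t with hb
  have ha0 : 0 ≤ a := cdf'_nonneg s
  have hb0 : 0 ≤ b := cdf'_nonneg t
  have ha1 : a ≤ 1 := cdf'_le_one s
  have hb1 : b ≤ 1 := cdf'_le_one t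
  rw [pi0, Measure.map_apply (pi0_pair_measurable hx huΩ hvΩ)
    (measurableSet_Ioi.prod measurableSet_Ioi),
    Measure.restrict_apply ((pi0_pair_measurable hx huΩ hvΩ)
      (measurableSet_Ioi.prod measurableSet_Ioi))]
  set S := (fun σ => (icdfExt u xmax σ, icdfExt v xmax σ)) ⁻¹' Ioi s ×ˢ Ioi t ∩ Ioo 0 1 with hS
  have hsub1 : Ioo (max a b) 1 ⊆ S := by
    intro σ hσ
    have hσ1 : σ ∈ Ioo (0:ℝ) 1 := ⟨lt_of_le_of_lt (le_trans ha0 (le_max_left a b)) hσ.1, hσ.2⟩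
    refine ⟨⟨?_, ?_⟩, hσ1⟩
    · simp only [mem_Ioi, icdfExt_eq hσ1]
      by_contra hcon
      push_neg at hcon
      have := le_cdf_of_icdf_le huΩ hσ1.2 hcon
      have h2 := lt_of_le_of_lt (le_max_left a b) hσ.1
      rw [← ha] at this; linarith
    · simp only [mem_Ioi, icdfExt_eq hσ1]
      by_contra hcon
      push_neg at hcon
      have := le_cdf_of_icdf_le hvΩ hσ1.2 hcon
      have h2 := lt_of_le_of_lt (le_max_right a b) hσ.1
      rw [← hb] at this; linarith
  have hsub2 : S ⊆ Ico (max a b) 1 := by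
    rintro σ ⟨hmem, hσ1⟩
    simp only [mem_preimage, mem_prod, mem_Ioi, icdfExt_eq hσ1] at hmem
    refine ⟨max_le ?_ ?_, hσ1.2⟩
    · by_contra hcon
      push_neg at hcon
      exact absurd (icdf_le_of_lt_cdf huΩ hσ1.1 hcon) (not_le.mpr hmem.1)
    · by_contra hcon
      push_neg at hcon
      exact absurd (icdf_le_of_lt_cdf hvΩ hσ1.1 hcon) (not_le.mpr hmem.2)
  have hvolS : volume S = ENNReal.ofReal (1 - max a b) := by
    refine le_antisymm (le_trans (measure_mono hsub2) ?_) (le_trans ?_ (measure_mono hsub1))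
    · simp [Real.volume_Ico]
    · simp [Real.volume_Ioo]
  rw [hvolS]
  have hu' : u (Ioi s) = 1 - ENNReal.ofReal a := by
    rw [ha, cdf', ENNReal.ofReal_toReal (measure_ne_top u _), ← Set.compl_Iic,
      measure_compl measurableSet_Iic (measure_ne_top u _), measure_univ]
  have hv' : v (Ioi t) = 1 - ENNReal.ofReal b := by
    rw [hb, cdf', ENNReal.ofReal_toReal (measure_ne_top v _), ← Set.compl_Iic,
      measure_compl measurableSet_Iic (measure_ne_top v _), measure_univ]
  rw [hu', hv']
  rcases le_total a b with h | h
  · rw [max_eq_right h, min_eq_right (tsub_le_tsub_left (ENNReal.ofReal_le_ofReal h) 1),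
      ← ENNReal.ofReal_one, ← ENNReal.ofReal_sub _ hb0]
  · rw [max_eq_left h, min_eq_left (tsub_le_tsub_left (ENNReal.ofReal_le_ofReal h) 1),
      ← ENNReal.ofReal_one, ← ENNReal.ofReal_sub _ ha0]

end pi0

lemma phi_abs_le_one (s a : ℝ) : |phi s a| ≤ 1 := by
  unfold phi; split_ifs <;> norm_num

lemma abs_le_of_mem {xmin xmax x : ℝ} (h : x ∈ Icc xmin xmax) :
    |x| ≤ max |xmin| |xmax| := by
  rw [abs_le]
  constructor
  · linarith [neg_abs_le xmin, h.1, le_max_left |xmin| |xmax|]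
  · linarith [le_abs_self xmax, h.2, le_max_right |xmin| |xmax|]

section fubini

variable {u v : Measure ℝ} [IsProbabilityMeasure u] [IsProbabilityMeasure v] {xmin xmax : ℝ}

lemma ae_prod_fst (ρ : Measure (ℝ × ℝ)) [IsProbabilityMeasure ρ]
    (hsupp : ∀ᵐ p ∂ρ, p.1 ∈ Icc xmin xmax ∧ p.2 ∈ Icc xmin xmax) :
    ∀ᵐ z ∂ρ.prod (volume : Measure ℝ), z.1.1 ∈ Icc xmin xmax ∧ z.1.2 ∈ Icc xmin xmax :=
  (Measure.quasiMeasurePreserving_fst.tendsto_ae).eventually hsupp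

lemma indicator_Ico_integrable {m M : ℝ} :
    Integrable ((Ico m M).indicator (1 : ℝ → ℝ)) volume := by
  rw [integrable_indicator_iff measurableSet_Ico]
  exact integrableOn_const measure_Ico_lt_top.ne

lemma intF_cross (ρ : Measure (ℝ × ℝ)) [IsProbabilityMeasure ρ]
    (hsupp : ∀ᵐ p ∂ρ, p.1 ∈ Icc xmin xmax ∧ p.2 ∈ Icc xmin xmax) :
    Integrable (fun z : (ℝ × ℝ) × ℝ => phi z.2 z.1.1 * z.1.2) (ρ.prod volume) := by
  set m := min xmin 0 with hm
  set M := max xmax 0 with hM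
  set C := max |xmin| |xmax| with hCdef
  have hC : 0 ≤ C := le_trans (abs_nonneg xmin) (le_max_left _ _)
  have hmeas : Measurable fun z : (ℝ × ℝ) × ℝ => phi z.2 z.1.1 * z.1.2 :=
    (measurable_phi.comp (measurable_snd.prodMk measurable_fst.fst)).mul measurable_fst.snd
  have hbound_int : Integrable (fun z : (ℝ × ℝ) × ℝ =>
      C * (Ico m M).indicator 1 z.2) (ρ.prod volume) :=
    (integrable_const C).mul_prod indicator_Ico_integrable
  refine hbound_int.mono' hmeas.aestronglyMeasurable ?_
  filter_upwards [ae_prod_fst ρ hsupp] with z hz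
  have h1 : |phi z.2 z.1.1| ≤ (Ico m M).indicator 1 z.2 :=
    phi_abs_le (min_le_right _ _) (le_max_right _ _)
      ⟨le_trans (min_le_left _ _) hz.1.1, le_trans hz.1.2 (le_max_left _ _)⟩ z.2
  have h2 : |z.1.2| ≤ C := abs_le_of_mem hz.2
  rw [Real.norm_eq_abs, abs_mul]
  calc |phi z.2 z.1.1| * |z.1.2| ≤ (Ico m M).indicator 1 z.2 * C :=
        mul_le_mul h1 h2 (abs_nonneg _) (indicator_nonneg (fun _ _ => zero_le_one) z.2)
    _ = C * (Ico m M).indicator 1 z.2 := mul_comm _ _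

lemma intF_cross2 (ρ : Measure (ℝ × ℝ)) [IsProbabilityMeasure ρ]
    (hsupp : ∀ᵐ p ∂ρ, p.1 ∈ Icc xmin xmax ∧ p.2 ∈ Icc xmin xmax) (s : ℝ) :
    Integrable (fun z : (ℝ × ℝ) × ℝ => phi s z.1.1 * phi z.2 z.1.2) (ρ.prod volume) := by
  set m := min xmin 0 with hm
  set M := max xmax 0 with hM
  have hmeas : Measurable fun z : (ℝ × ℝ) × ℝ => phi s z.1.1 * phi z.2 z.1.2 :=
    ((measurable_phi.comp (measurable_const.prodMk measurable_fst.fst))).mul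
      (measurable_phi.comp (measurable_snd.prodMk measurable_fst.snd))
  have hbound_int : Integrable (fun z : (ℝ × ℝ) × ℝ =>
      (1:ℝ) * (Ico m M).indicator 1 z.2) (ρ.prod volume) :=
    (integrable_const 1).mul_prod indicator_Ico_integrable
  refine hbound_int.mono' hmeas.aestronglyMeasurable ?_
  filter_upwards [ae_prod_fst ρ hsupp] with z hz
  have h1 : |phi z.2 z.1.2| ≤ (Ico m M).indicator 1 z.2 :=
    phi_abs_le (min_le_right _ _) (le_max_right _ _)
      ⟨le_trans (min_le_left _ _) hz.2.1, le_trans hz.2.2 (le_max_left _ _)⟩ z.2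
  rw [Real.norm_eq_abs, abs_mul, one_mul]
  calc |phi s z.1.1| * |phi z.2 z.1.2| ≤ 1 * ((Ico m M).indicator 1 z.2) :=
        mul_le_mul (phi_abs_le_one s z.1.1) h1 (abs_nonneg _)  zero_le_one
    _ = (Ico m M).indicator 1 z.2 := one_mul _

lemma cross_eq (ρ : Measure (ℝ × ℝ)) [IsProbabilityMeasure ρ]
    (hsupp : ∀ᵐ p ∂ρ, p.1 ∈ Icc xmin xmax ∧ p.2 ∈ Icc xmin xmax) :
    ∫ p, p.1 * p.2 ∂ρ = ∫ s, (∫ p, phi s p.1 * p.2 ∂ρ) := by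
  calc ∫ p, p.1 * p.2 ∂ρ = ∫ p : ℝ × ℝ, (∫ s, phi s p.1 * p.2) ∂ρ := by
        congr 1
        ext p
        rw [integral_mul_const, integral_phi]
    _ = ∫ s, (∫ p, phi s p.1 * p.2 ∂ρ) := integral_integral_swap (intF_cross ρ hsupp)

lemma inner_eq (ρ : Measure (ℝ × ℝ)) [IsProbabilityMeasure ρ]
    (hsupp : ∀ᵐ p ∂ρ, p.1 ∈ Icc xmin xmax ∧ p.2 ∈ Icc xmin xmax) (s : ℝ) :
    ∫ p, phi s p.1 * p.2 ∂ρ = ∫ t, (∫ p, phi s p.1 * phi t p.2 ∂ρ) := by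
  calc ∫ p, phi s p.1 * p.2 ∂ρ = ∫ p : ℝ × ℝ, (∫ t, phi s p.1 * phi t p.2) ∂ρ := by
        congr 1
        ext p
        rw [integral_const_mul, integral_phi]
    _ = ∫ t, (∫ p, phi s p.1 * phi t p.2 ∂ρ) := integral_integral_swap (intF_cross2 ρ hsupp s)

end fubini

section compare

variable {u v : Measure ℝ} [IsProbabilityMeasure u] [IsProbabilityMeasure v] {xmin xmax : ℝ}

lemma cross_le (π : Measure (ℝ × ℝ)) [IsProbabilityMeasure π]
    (hx : xmin < xmax) (huΩ : ∀ᵐ x ∂u, x ∈ Icc xmin xmax)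
    (hvΩ : ∀ᵐ x ∂v, x ∈ Icc xmin xmax)
    (hf : π.map Prod.fst = u) (hg : π.map Prod.snd = v) :
    ∫ p, p.1 * p.2 ∂π ≤ ∫ p, p.1 * p.2 ∂(pi0 u v xmax) := by
  haveI := pi0_prob hx huΩ hvΩ
  have hsuppπ := coupling_ae_mem π hf hg huΩ hvΩ
  have hsupp0 := coupling_ae_mem (pi0 u v xmax) (pi0_fst hx huΩ hvΩ) (pi0_snd hx huΩ hvΩ) huΩ hvΩ
  rw [cross_eq π hsuppπ, cross_eq _ hsupp0]
  refine integral_mono ((intF_cross π hsuppπ).integral_prod_right)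
    ((intF_cross _ hsupp0).integral_prod_right) (fun s => ?_)
  rw [inner_eq π hsuppπ s, inner_eq _ hsupp0 s]
  refine integral_mono ((intF_cross2 π hsuppπ s).integral_prod_right)
    ((intF_cross2 _ hsupp0 s).integral_prod_right) (fun t => ?_)
  rw [H_eq π hf hg s t, H_eq _ (pi0_fst hx huΩ hvΩ) (pi0_snd hx huΩ hvΩ) s t]
  have hmono : (π (Ioi s ×ˢ Ioi t)).toReal ≤ ((pi0 u v xmax) (Ioi s ×ˢ Ioi t)).toReal := by
    rw [pi0_prod_eq hx huΩ hvΩ s t]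
    refine ENNReal.toReal_mono ?_ (coupling_prod_le π hf hg s t)
    exact ne_of_lt (lt_of_le_of_lt (min_le_left _ _) (measure_lt_top u _))
  linarith

lemma moment_fst (π : Measure (ℝ × ℝ)) (hf : π.map Prod.fst = u) :
    ∫ p, (p.1 : ℝ) ^ 2 ∂π = ∫ x, x ^ 2 ∂u := by
  rw [← hf, integral_map measurable_fst.aemeasurable
    ((continuous_pow 2).measurable.aestronglyMeasurable)]

lemma moment_snd (π : Measure (ℝ × ℝ)) (hg : π.map Prod.snd = v) :
    ∫ p, (p.2 : ℝ) ^ 2 ∂π = ∫ x, x ^ 2 ∂v := by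
  rw [← hg, integral_map measurable_snd.aemeasurable
    ((continuous_pow 2).measurable.aestronglyMeasurable)]

lemma sq_expand (ρ : Measure (ℝ × ℝ)) [IsProbabilityMeasure ρ]
    (hsupp : ∀ᵐ p ∂ρ, p.1 ∈ Icc xmin xmax ∧ p.2 ∈ Icc xmin xmax) :
    ∫ p, (p.1 - p.2) ^ 2 ∂ρ =
      (∫ p, p.1 ^ 2 ∂ρ) - 2 * (∫ p, p.1 * p.2 ∂ρ) + ∫ p, p.2 ^ 2 ∂ρ := by
  set C := max |xmin| |xmax| with hC
  have hC0 : 0 ≤ C := le_trans (abs_nonneg xmin) (le_max_left _ _)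
  have haeb : ∀ᵐ p ∂ρ, |p.1| ≤ C ∧ |p.2| ≤ C := by
    filter_upwards [hsupp] with p hp
    exact ⟨abs_le_of_mem hp.1, abs_le_of_mem hp.2⟩
  have i1 : Integrable (fun p : ℝ × ℝ => p.1 ^ 2) ρ := by
    refine (integrable_const (C ^ 2)).mono'
      ((measurable_fst.pow_const 2).aestronglyMeasurable) ?_
    filter_upwards [haeb] with p hp
    rw [Real.norm_eq_abs, abs_pow]
    exact pow_le_pow_left₀ (abs_nonneg _) hp.1 2
  have i2 : Integrable (fun p : ℝ × ℝ => p.2 ^ 2) ρ := by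
    refine (integrable_const (C ^ 2)).mono'
      ((measurable_snd.pow_const 2).aestronglyMeasurable) ?_
    filter_upwards [haeb] with p hp
    rw [Real.norm_eq_abs, abs_pow]
    exact pow_le_pow_left₀ (abs_nonneg _) hp.2 2
  have i3 : Integrable (fun p : ℝ × ℝ => p.1 * p.2) ρ := by
    refine (integrable_const (C ^ 2)).mono'
      ((measurable_fst.mul measurable_snd).aestronglyMeasurable) ?_
    filter_upwards [haeb] with p hp
    rw [Real.norm_eq_abs, abs_mul, sq]
    exact mul_le_mul hp.1 hp.2 (abs_nonneg _) hC0
  have hpt : (fun p : ℝ × ℝ => (p.1 - p.2) ^ 2) =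
      fun p : ℝ × ℝ => p.1 ^ 2 - 2 * (p.1 * p.2) + p.2 ^ 2 := by
    ext p; ring
  have j1 : Integrable (fun p : ℝ × ℝ => p.1 ^ 2 - 2 * (p.1 * p.2)) ρ :=
    i1.sub (i3.const_mul 2)
  rw [hpt, integral_add j1 i2, integral_sub i1 (i3.const_mul 2), integral_const_mul]

lemma pi0_integral (hx : xmin < xmax) (huΩ : ∀ᵐ x ∂u, x ∈ Icc xmin xmax)
    (hvΩ : ∀ᵐ x ∂v, x ∈ Icc xmin xmax) :
    ∫ p, (p.1 - p.2) ^ 2 ∂(pi0 u v xmax) =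
      ∫ s in Ioo (0:ℝ) 1, (icdf u s - icdf v s) ^ 2 := by
  rw [pi0, integral_map (f := fun p : ℝ × ℝ => (p.1 - p.2) ^ 2) (pi0_pair_measurable hx huΩ hvΩ).aemeasurable
    (((measurable_fst.sub measurable_snd).pow_const 2).aestronglyMeasurable)]
  refine integral_congr_ae ?_
  filter_upwards [ae_restrict_mem measurableSet_Ioo] with σ hσ
  rw [icdfExt_eq hσ, icdfExt_eq hσ]

lemma moment_icdf (μ : Measure ℝ) [IsProbabilityMeasure μ] (hx : xmin < xmax)
    (huΩ : ∀ᵐ x ∂μ, x ∈ Icc xmin xmax) :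
    ∫ x, x ^ 2 ∂μ = ∫ s in Ioo (0:ℝ) 1, (icdf μ s) ^ 2 := by
  conv_lhs => rw [← map_icdf hx huΩ, Measure.map_congr (icdf_aeeq (xmax := xmax))]
  rw [integral_map ((icdfExt_mono huΩ).measurable.aemeasurable)
    ((continuous_pow 2).measurable.aestronglyMeasurable)]
  refine integral_congr_ae ?_
  filter_upwards [ae_restrict_mem measurableSet_Ioo] with σ hσ
  rw [icdfExt_eq hσ]

lemma transport_lb (π : Measure (ℝ × ℝ)) [IsProbabilityMeasure π]
    (hx : xmin < xmax) (huΩ : ∀ᵐ x ∂u, x ∈ Icc xmin xmax)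
    (hvΩ : ∀ᵐ x ∂v, x ∈ Icc xmin xmax)
    (hf : π.map Prod.fst = u) (hg : π.map Prod.snd = v) :
    ∫ s in Ioo (0:ℝ) 1, (icdf u s - icdf v s) ^ 2 ≤ ∫ p, (p.1 - p.2) ^ 2 ∂π := by
  haveI := pi0_prob hx huΩ hvΩ
  have hsuppπ := coupling_ae_mem π hf hg huΩ hvΩ
  have hsupp0 := coupling_ae_mem (pi0 u v xmax) (pi0_fst hx huΩ hvΩ) (pi0_snd hx huΩ hvΩ) huΩ hvΩ
  rw [← pi0_integral hx huΩ hvΩ, sq_expand π hsuppπ, sq_expand _ hsupp0,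
    moment_fst π hf, moment_fst _ (pi0_fst hx huΩ hvΩ),
    moment_snd π hg, moment_snd _ (pi0_snd hx huΩ hvΩ)]
  have := cross_le π hx huΩ hvΩ hf hg
  linarith

end compare

/-- The L²-Wasserstein distance, defined as the infimum over couplings. -/
noncomputable def W2 (μ ν : Measure ℝ) : ℝ :=
  sInf {r | ∃ π : Measure (ℝ × ℝ), IsProbabilityMeasure π ∧
    π.map Prod.fst = μ ∧ π.map Prod.snd = ν ∧
    r = (∫ p, (p.1 - p.2) ^ 2 ∂π) ^ (1 / 2 : ℝ)}

theorem stmt0 (xmin xmax : ℝ) (hx : xmin < xmax) (u v : Measure ℝ)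
    (hu : IsProbabilityMeasure u) (hv : IsProbabilityMeasure v)
    (huΩ : ∀ᵐ x ∂u, x ∈ Icc xmin xmax) (hvΩ : ∀ᵐ x ∂v, x ∈ Icc xmin xmax)
    (hu2 : Integrable (fun x => x ^ 2) u) (hv2 : Integrable (fun x => x ^ 2) v) :
    W2 u v = (∫ s in Ioo (0 : ℝ) 1, (icdf u s - icdf v s) ^ 2) ^ (1 / 2 : ℝ) := by
  haveI := pi0_prob hx huΩ hvΩ
  have hR0 : 0 ≤ ∫ s in Ioo (0 : ℝ) 1, (icdf u s - icdf v s) ^ 2 :=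
    integral_nonneg (fun s => sq_nonneg _)
  have hmem : (∫ s in Ioo (0 : ℝ) 1, (icdf u s - icdf v s) ^ 2) ^ (1 / 2 : ℝ) ∈
      {r | ∃ π : Measure (ℝ × ℝ), IsProbabilityMeasure π ∧
        π.map Prod.fst = u ∧ π.map Prod.snd = v ∧
        r = (∫ p, (p.1 - p.2) ^ 2 ∂π) ^ (1 / 2 : ℝ)} :=
    ⟨pi0 u v xmax, pi0_prob hx huΩ hvΩ, pi0_fst hx huΩ hvΩ, pi0_snd hx huΩ hvΩ,
      by rw [pi0_integral hx huΩ hvΩ]⟩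
  rw [W2]
  refine le_antisymm (csInf_le ⟨0, fun r hr => ?_⟩ hmem) (le_csInf ⟨_, hmem⟩ ?_)
  · obtain ⟨π, hπ, hfπ, hgπ, hr⟩ := hr
    rw [hr]
    exact Real.rpow_nonneg (integral_nonneg (fun p => sq_nonneg _)) _
  · rintro r ⟨π, hπ, hfπ, hgπ, hr⟩
    rw [hr]
    haveI := hπ
    exact Real.rpow_le_rpow hR0 (transport_lb π hx huΩ hvΩ hfπ hgπ) (by norm_num)
end

section
/- For probability measures u₁,…,uₙ on Ω ⊆ ℝ with finite second moments and barycentric weights λ₁,…,λₙ ≥ 0 summing to 1, the unique minimizer over v ∈ P₂(Ω) of ∑ᵢ λᵢ W₂(v,uᵢ)² has quantile function equal to ∑ᵢ λᵢ icdf_{uᵢ}. -/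
open MeasureTheory Set ENNReal

def memP2 (xmin xmax : ℝ) (μ : Measure ℝ) : Prop :=
  IsProbabilityMeasure μ ∧ (∀ᵐ x ∂μ, x ∈ Icc xmin xmax) ∧ Integrable (fun x => x ^ 2) μ

namespace WassAux

variable {xmin xmax : ℝ} {μ : Measure ℝ}

lemma compl_null (hμ : memP2 xmin xmax μ) : μ (Icc xmin xmax)ᶜ = 0 := by
  have := hμ.2.1
  rwa [ae_iff] at this

lemma cdf'_nonneg (μ : Measure ℝ) (x : ℝ) : 0 ≤ cdf' μ x := ENNReal.toReal_nonneg

lemma cdf'_le_one (hμ : memP2 xmin xmax μ) (x : ℝ) : cdf' μ x ≤ 1 := by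
  have := hμ.1
  have h1 : μ (Iic x) ≤ 1 := prob_le_one
  have := ENNReal.toReal_mono ENNReal.one_ne_top h1
  simpa [cdf'] using this

lemma cdf'_mono (hμ : memP2 xmin xmax μ) : Monotone (cdf' μ) := by
  have := hμ.1
  intro a b hab
  exact ENNReal.toReal_mono (measure_ne_top μ _) (measure_mono (Iic_subset_Iic.2 hab))

lemma cdf'_of_lt (hμ : memP2 xmin xmax μ) {x : ℝ} (h : x < xmin) : cdf' μ x = 0 := by
  have hsub : Iic x ⊆ (Icc xmin xmax)ᶜ := fun y hy hy' => absurd hy'.1 (by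
    simp only [mem_Iic] at hy; exact not_le.2 (lt_of_le_of_lt hy h))
  have : μ (Iic x) = 0 := measure_mono_null hsub (compl_null hμ)
  simp [cdf', this]

lemma cdf'_of_ge (hμ : memP2 xmin xmax μ) {x : ℝ} (h : xmax ≤ x) : cdf' μ x = 1 := by
  have := hμ.1
  have hsub : Icc xmin xmax ⊆ Iic x := fun y hy => le_trans hy.2 h
  have h1 : (1 : ℝ≥0∞) ≤ μ (Iic x) := by
    calc (1 : ℝ≥0∞) = μ univ := (measure_univ).symm
    _ ≤ μ (Iic x) + μ (Icc xmin xmax)ᶜ := by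
        refine le_trans (measure_mono ?_) (measure_union_le _ _)
        intro y _
        by_cases hy : y ∈ Iic x
        · exact Or.inl hy
        · exact Or.inr (fun hc => hy (hsub hc))
    _ = μ (Iic x) := by rw [compl_null hμ, add_zero]
  have h2 : μ (Iic x) ≤ 1 := prob_le_one
  have : μ (Iic x) = 1 := le_antisymm h2 h1
  simp [cdf', this]

lemma cdf'_eq_cdf (hμ : memP2 xmin xmax μ) : cdf' μ = ⇑(ProbabilityTheory.cdf μ) := by
  have := hμ.1
  funext x
  rw [ProbabilityTheory.cdf_eq_real]
  rfl

lemma le_cdf'_of_forall (hμ : memP2 xmin xmax μ) {a s : ℝ}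
    (h : ∀ b, a < b → s ≤ cdf' μ b) : s ≤ cdf' μ a := by
  have hc : Filter.Tendsto (cdf' μ) (nhdsWithin a (Ioi a)) (nhds (cdf' μ a)) := by
    rw [cdf'_eq_cdf hμ]
    exact ((ProbabilityTheory.cdf μ).right_continuous a).mono Ioi_subset_Ici_self
  exact ge_of_tendsto hc (Filter.eventually_of_mem self_mem_nhdsWithin (fun b hb => h b hb))

lemma mem_S (hμ : memP2 xmin xmax μ) {s : ℝ} (hs : s < 1) : xmax ∈ {x | s < cdf' μ x} := by
  simp only [mem_setOf_eq, cdf'_of_ge hμ le_rfl]; exact hs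

lemma S_subset (hμ : memP2 xmin xmax μ) {s : ℝ} (hs : 0 < s) :
    {x | s < cdf' μ x} ⊆ Ici xmin := by
  intro x hx
  by_contra h
  rw [mem_Ici, not_le] at h
  rw [mem_setOf_eq, cdf'_of_lt hμ h] at hx
  exact absurd hx (not_lt.2 hs.le)

lemma S_bdd (hμ : memP2 xmin xmax μ) {s : ℝ} (hs : 0 < s) : BddBelow {x | s < cdf' μ x} :=
  ⟨xmin, S_subset hμ hs⟩

lemma S_nonempty (hμ : memP2 xmin xmax μ) {s : ℝ} (hs : s < 1) :
    Set.Nonempty {x | s < cdf' μ x} := ⟨xmax, mem_S hμ hs⟩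

lemma icdf_mem (hμ : memP2 xmin xmax μ) {s : ℝ} (hs : s ∈ Ioo (0:ℝ) 1) :
    icdf μ s ∈ Icc xmin xmax :=
  ⟨le_csInf (S_nonempty hμ hs.2) (fun x hx => S_subset hμ hs.1 hx),
    csInf_le (S_bdd hμ hs.1) (mem_S hμ hs.2)⟩

lemma icdf_le (hμ : memP2 xmin xmax μ) {s a : ℝ} (hs0 : 0 < s) (h : s < cdf' μ a) :
    icdf μ s ≤ a := csInf_le (S_bdd hμ hs0) h

lemma le_cdf' (hμ : memP2 xmin xmax μ) {s a : ℝ} (hs : s ∈ Ioo (0:ℝ) 1)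
    (h : icdf μ s ≤ a) : s ≤ cdf' μ a := by
  apply le_cdf'_of_forall hμ
  intro b hb
  obtain ⟨x, hx, hxb⟩ := exists_lt_of_csInf_lt (S_nonempty hμ hs.2) (lt_of_le_of_lt h hb)
  exact le_trans (le_of_lt hx) (cdf'_mono hμ hxb.le)

lemma icdf_monoOn (hμ : memP2 xmin xmax μ) : MonotoneOn (icdf μ) (Ioo (0:ℝ) 1) := by
  intro s hs t ht hst
  exact csInf_le_csInf (S_bdd hμ hs.1) (S_nonempty hμ ht.2)
    (fun x hx => lt_of_le_of_lt hst hx)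

lemma icdf_aemeasurable (hμ : memP2 xmin xmax μ) :
    AEMeasurable (icdf μ) (volume.restrict (Ioo (0:ℝ) 1)) :=
  aemeasurable_restrict_of_monotoneOn measurableSet_Ioo (icdf_monoOn hμ)

instance : IsProbabilityMeasure (volume.restrict (Ioo (0:ℝ) 1)) :=
  ⟨by simp⟩

lemma map_icdf (hμ : memP2 xmin xmax μ) :
    (volume.restrict (Ioo (0:ℝ) 1)).map (icdf μ) = μ := by
  have := hμ.1
  refine Measure.ext_of_Iic _ _ (fun a => ?_)
  rw [Measure.map_apply_of_aemeasurable (icdf_aemeasurable hμ) measurableSet_Iic,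
    Measure.restrict_apply' measurableSet_Ioo]
  have hF0 : 0 ≤ cdf' μ a := cdf'_nonneg μ a
  have hF1 : cdf' μ a ≤ 1 := cdf'_le_one hμ a
  have hsub1 : Ioo (0:ℝ) (cdf' μ a) ⊆ icdf μ ⁻¹' (Iic a) ∩ Ioo 0 1 := by
    intro s hs
    refine ⟨icdf_le hμ hs.1 hs.2, hs.1, lt_of_lt_of_le hs.2 hF1⟩
  have hsub2 : icdf μ ⁻¹' (Iic a) ∩ Ioo 0 1 ⊆ Ioc (0:ℝ) (cdf' μ a) := by
    rintro s ⟨h1, h2⟩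
    exact ⟨h2.1, le_cdf' hμ h2 h1⟩
  have h1 : volume (Ioo (0:ℝ) (cdf' μ a)) ≤ volume (icdf μ ⁻¹' (Iic a) ∩ Ioo 0 1) :=
    measure_mono hsub1
  have h2 : volume (icdf μ ⁻¹' (Iic a) ∩ Ioo (0:ℝ) 1) ≤ volume (Ioc (0:ℝ) (cdf' μ a)) :=
    measure_mono hsub2
  rw [Real.volume_Ioo, sub_zero] at h1
  rw [Real.volume_Ioc, sub_zero] at h2
  have : volume (icdf μ ⁻¹' (Iic a) ∩ Ioo (0:ℝ) 1) = ENNReal.ofReal (cdf' μ a) :=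
    le_antisymm h2 h1
  rw [this]
  simp only [cdf']
  rw [ENNReal.ofReal_toReal (measure_ne_top μ _)]


lemma icdf_rc (hμ : memP2 xmin xmax μ) {t ε : ℝ} (ht : t ∈ Ioo (0:ℝ) 1) (hε : 0 < ε) :
    ∃ s ∈ Ioo t 1, icdf μ s ≤ icdf μ t + ε := by
  obtain ⟨x, hx, hxlt⟩ := exists_lt_of_csInf_lt (S_nonempty hμ ht.2)
    (lt_add_of_pos_right (icdf μ t) hε)
  simp only [mem_setOf_eq] at hx
  set s := (t + min (cdf' μ x) 1) / 2 with hs_def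
  have h1 : t < min (cdf' μ x) 1 := lt_min hx ht.2
  have hts : t < s := by rw [hs_def]; linarith
  have hs1 : s < 1 := by
    have : min (cdf' μ x) 1 ≤ 1 := min_le_right _ _
    rw [hs_def]; linarith [ht.2]
  have hsx : s < cdf' μ x := by
    have : min (cdf' μ x) 1 ≤ cdf' μ x := min_le_left _ _
    rw [hs_def]; linarith
  exact ⟨s, ⟨hts, hs1⟩, le_trans (icdf_le hμ (lt_trans ht.1 hts) hsx) hxlt.le⟩

lemma icdf_map_eq {g : ℝ → ℝ}
    (hmono : MonotoneOn g (Ioo (0:ℝ) 1))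
    (hrc : ∀ t ∈ Ioo (0:ℝ) 1, ∀ ε > (0:ℝ), ∃ s ∈ Ioo t 1, g s ≤ g t + ε)
    {t : ℝ} (ht : t ∈ Ioo (0:ℝ) 1) :
    icdf ((volume.restrict (Ioo (0:ℝ) 1)).map g) t = g t := by
  set v := (volume.restrict (Ioo (0:ℝ) 1)).map g with hv
  have ham : AEMeasurable g (volume.restrict (Ioo (0:ℝ) 1)) :=
    aemeasurable_restrict_of_monotoneOn measurableSet_Ioo hmono
  haveI : IsProbabilityMeasure v := Measure.isProbabilityMeasure_map ham
  have hvIic : ∀ a, v (Iic a) = volume (g ⁻¹' (Iic a) ∩ Ioo 0 1) := by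
    intro a
    rw [hv, Measure.map_apply_of_aemeasurable ham measurableSet_Iic,
      Measure.restrict_apply' measurableSet_Ioo]
  have hiff : ∀ a : ℝ, t < cdf' v a ↔ ∃ s ∈ Ioo t 1, g s ≤ a := by
    intro a
    constructor
    · intro h
      by_contra hcon
      push_neg at hcon
      have hsub : g ⁻¹' (Iic a) ∩ Ioo 0 1 ⊆ Ioc (0:ℝ) t := by
        rintro r ⟨h1, h2⟩
        refine ⟨h2.1, ?_⟩
        by_contra hr
        push_neg at hr
        exact absurd h1 (not_le.2 (hcon r ⟨hr, h2.2⟩))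
      have hle : v (Iic a) ≤ ENNReal.ofReal t := by
        rw [hvIic a]
        calc volume (g ⁻¹' (Iic a) ∩ Ioo (0:ℝ) 1) ≤ volume (Ioc (0:ℝ) t) :=
          measure_mono hsub
        _ = ENNReal.ofReal t := by rw [Real.volume_Ioc, sub_zero]
      have : cdf' v a ≤ t := by
        have := ENNReal.toReal_mono ENNReal.ofReal_ne_top hle
        rwa [ENNReal.toReal_ofReal (le_of_lt ht.1)] at this
      exact absurd h (not_lt.2 this)
    · rintro ⟨s, hs, hgs⟩
      have hsub : Ioo (0:ℝ) s ⊆ g ⁻¹' (Iic a) ∩ Ioo 0 1 := by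
        intro r hr
        have hrI : r ∈ Ioo (0:ℝ) 1 := ⟨hr.1, lt_trans hr.2 hs.2⟩
        have hsI : s ∈ Ioo (0:ℝ) 1 := ⟨lt_trans ht.1 hs.1, hs.2⟩
        exact ⟨le_trans (hmono hrI hsI hr.2.le) hgs, hrI⟩
      have hge : ENNReal.ofReal s ≤ v (Iic a) := by
        rw [hvIic a]
        calc ENNReal.ofReal s = volume (Ioo (0:ℝ) s) := by rw [Real.volume_Ioo, sub_zero]
        _ ≤ volume (g ⁻¹' (Iic a) ∩ Ioo (0:ℝ) 1) := measure_mono hsub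
      have : s ≤ cdf' v a := by
        have := ENNReal.toReal_mono (measure_ne_top v _) hge
        rwa [ENNReal.toReal_ofReal (le_of_lt (lt_trans ht.1 hs.1))] at this
      exact lt_of_lt_of_le hs.1 this
  have hset : {x | t < cdf' v x} = {a | ∃ s ∈ Ioo t 1, g s ≤ a} := by
    ext a; exact hiff a
  have hlb : ∀ a ∈ {a | ∃ s ∈ Ioo t 1, g s ≤ a}, g t ≤ a := by
    rintro a ⟨s, hs, hgs⟩
    exact le_trans (hmono ht ⟨lt_trans ht.1 hs.1, hs.2⟩ hs.1.le) hgs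
  obtain ⟨s₀, hs₀, hgs₀⟩ := hrc t ht 1 one_pos
  have hne : Set.Nonempty {a | ∃ s ∈ Ioo t 1, g s ≤ a} := ⟨g s₀, s₀, hs₀, le_rfl⟩
  rw [icdf, hset]
  refine le_antisymm ?_ (le_csInf hne hlb)
  refine le_of_forall_pos_le_add (fun ε hε => ?_)
  obtain ⟨s, hs, hgs⟩ := hrc t ht ε hε
  exact le_trans (csInf_le ⟨g t, hlb⟩ ⟨s, hs, le_rfl⟩) hgs


lemma bdd_integrable {α : Type*} [MeasurableSpace α] {π : Measure α} [IsFiniteMeasure π]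
    {f : α → ℝ} (hf : AEStronglyMeasurable f π) {C : ℝ} (h : ∀ᵐ x ∂π, |f x| ≤ C) :
    Integrable f π :=
  Integrable.mono' (integrable_const C) hf (by simpa [Real.norm_eq_abs] using h)

lemma marg_fst {π : Measure (ℝ × ℝ)} (h1 : π.map Prod.fst = μ) {S : Set ℝ}
    (hS : MeasurableSet S) : π (Prod.fst ⁻¹' S) = μ S := by
  rw [← h1, Measure.map_apply measurable_fst hS]

lemma marg_snd {ν : Measure ℝ} {π : Measure (ℝ × ℝ)} (h2 : π.map Prod.snd = ν) {S : Set ℝ}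
    (hS : MeasurableSet S) : π (Prod.snd ⁻¹' S) = ν S := by
  rw [← h2, Measure.map_apply measurable_snd hS]

lemma coupl_fst (hμ : memP2 xmin xmax μ) {π : Measure (ℝ × ℝ)} (h1 : π.map Prod.fst = μ) :
    ∀ᵐ p ∂π, p.1 ∈ Icc xmin xmax := by
  rw [ae_iff]
  have he : {p : ℝ × ℝ | ¬ p.1 ∈ Icc xmin xmax} = Prod.fst ⁻¹' (Icc xmin xmax)ᶜ := rfl
  rw [he, marg_fst h1 measurableSet_Icc.compl, compl_null hμ]

lemma coupl_snd {ν : Measure ℝ} (hν : memP2 xmin xmax ν) {π : Measure (ℝ × ℝ)}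
    (h2 : π.map Prod.snd = ν) : ∀ᵐ p ∂π, p.2 ∈ Icc xmin xmax := by
  rw [ae_iff]
  have he : {p : ℝ × ℝ | ¬ p.2 ∈ Icc xmin xmax} = Prod.snd ⁻¹' (Icc xmin xmax)ᶜ := rfl
  rw [he, marg_snd h2 measurableSet_Icc.compl, compl_null hν]

lemma setOf_eq_prod (s t : ℝ) : {p : ℝ × ℝ | s < p.1 ∧ t < p.2} = Ioi s ×ˢ Ioi t := rfl

lemma ofReal_one_sub_cdf' (hμ : memP2 xmin xmax μ) (s : ℝ) :
    ENNReal.ofReal (1 - cdf' μ s) = μ (Ioi s) := by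
  have := hμ.1
  rw [cdf', ENNReal.ofReal_sub _ ENNReal.toReal_nonneg, ENNReal.ofReal_one,
    ENNReal.ofReal_toReal (measure_ne_top μ _), ← compl_Iic,
    prob_compl_eq_one_sub measurableSet_Iic]

lemma coupling_le (hμ : memP2 xmin xmax μ) {ν : Measure ℝ} (hν : memP2 xmin xmax ν)
    {π : Measure (ℝ × ℝ)} [IsProbabilityMeasure π]
    (h1 : π.map Prod.fst = μ) (h2 : π.map Prod.snd = ν) (s t : ℝ) :
    π {p : ℝ × ℝ | s < p.1 ∧ t < p.2} ≤
      ENNReal.ofReal (1 - max (cdf' μ s) (cdf' ν t)) := by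
  rcases le_total (cdf' μ s) (cdf' ν t) with h | h
  · rw [max_eq_right h, ofReal_one_sub_cdf' hν]
    calc π {p : ℝ × ℝ | s < p.1 ∧ t < p.2} ≤ π (Prod.snd ⁻¹' Ioi t) :=
      measure_mono (fun p hp => hp.2)
    _ = ν (Ioi t) := marg_snd h2 measurableSet_Ioi
  · rw [max_eq_left h, ofReal_one_sub_cdf' hμ]
    calc π {p : ℝ × ℝ | s < p.1 ∧ t < p.2} ≤ π (Prod.fst ⁻¹' Ioi s) :=
      measure_mono (fun p hp => hp.1)
    _ = μ (Ioi s) := marg_fst h1 measurableSet_Ioi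


lemma ge_cdf'_of_lt_icdf (hμ : memP2 xmin xmax μ) {r s : ℝ} (hr : r ∈ Ioo (0:ℝ) 1)
    (h : s < icdf μ r) : cdf' μ s ≤ r := by
  by_contra hc
  push_neg at hc
  exact absurd (icdf_le hμ hr.1 hc) (not_le.2 h)

lemma lt_icdf (hμ : memP2 xmin xmax μ) {r s : ℝ} (hr : r ∈ Ioo (0:ℝ) 1)
    (h : cdf' μ s < r) : s < icdf μ r := by
  by_contra hc
  push_neg at hc
  exact absurd (le_cdf' hμ hr hc) (not_le.2 h)

noncomputable def copi (μ ν : Measure ℝ) : Measure (ℝ × ℝ) :=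
  (volume.restrict (Ioo (0:ℝ) 1)).map (fun s => (icdf μ s, icdf ν s))

variable {ν : Measure ℝ}

lemma pair_aemeasurable (hμ : memP2 xmin xmax μ) (hν : memP2 xmin xmax ν) :
    AEMeasurable (fun s => (icdf μ s, icdf ν s)) (volume.restrict (Ioo (0:ℝ) 1)) :=
  (icdf_aemeasurable hμ).prodMk (icdf_aemeasurable hν)

lemma copi_prob (hμ : memP2 xmin xmax μ) (hν : memP2 xmin xmax ν) :
    IsProbabilityMeasure (copi μ ν) :=
  Measure.isProbabilityMeasure_map (pair_aemeasurable hμ hν)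

lemma copi_fst (hμ : memP2 xmin xmax μ) (hν : memP2 xmin xmax ν) :
    (copi μ ν).map Prod.fst = μ := by
  rw [copi, AEMeasurable.map_map_of_aemeasurable
    measurable_fst.aemeasurable (pair_aemeasurable hμ hν)]
  exact map_icdf hμ

lemma copi_snd (hμ : memP2 xmin xmax μ) (hν : memP2 xmin xmax ν) :
    (copi μ ν).map Prod.snd = ν := by
  rw [copi, AEMeasurable.map_map_of_aemeasurable
    measurable_snd.aemeasurable (pair_aemeasurable hμ hν)]
  exact map_icdf hν

lemma copi_apply (hμ : memP2 xmin xmax μ) (hν : memP2 xmin xmax ν) (s t : ℝ) :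
    copi μ ν {p : ℝ × ℝ | s < p.1 ∧ t < p.2} =
      ENNReal.ofReal (1 - max (cdf' μ s) (cdf' ν t)) := by
  set m := max (cdf' μ s) (cdf' ν t) with hm
  have hm0 : 0 ≤ m := le_trans (cdf'_nonneg μ s) (le_max_left _ _)
  have hm1 : m ≤ 1 := max_le (cdf'_le_one hμ s) (cdf'_le_one hν t)
  rw [copi, Measure.map_apply_of_aemeasurable (pair_aemeasurable hμ hν)
    (by rw [setOf_eq_prod]; exact measurableSet_Ioi.prod measurableSet_Ioi),
    Measure.restrict_apply' measurableSet_Ioo]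
  have hsub1 : Ioo m 1 ⊆
      ((fun s' => (icdf μ s', icdf ν s')) ⁻¹' {p : ℝ × ℝ | s < p.1 ∧ t < p.2}) ∩ Ioo 0 1 := by
    intro r hr
    have hrI : r ∈ Ioo (0:ℝ) 1 := ⟨lt_of_le_of_lt hm0 hr.1, hr.2⟩
    refine ⟨⟨?_, ?_⟩, hrI⟩
    · exact lt_icdf hμ hrI (lt_of_le_of_lt (le_max_left _ _) hr.1)
    · exact lt_icdf hν hrI (lt_of_le_of_lt (le_max_right _ _) hr.1)
  have hsub2 : ((fun s' => (icdf μ s', icdf ν s')) ⁻¹' {p : ℝ × ℝ | s < p.1 ∧ t < p.2})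
      ∩ Ioo 0 1 ⊆ Ico m 1 := by
    rintro r ⟨hpre, hrI⟩
    refine ⟨max_le (ge_cdf'_of_lt_icdf hμ hrI hpre.1) (ge_cdf'_of_lt_icdf hν hrI hpre.2),
      hrI.2⟩
  have h1 : volume (Ioo m 1) ≤ volume (((fun s' => (icdf μ s', icdf ν s')) ⁻¹'
      {p : ℝ × ℝ | s < p.1 ∧ t < p.2}) ∩ Ioo 0 1) := measure_mono hsub1
  have h2 : volume (((fun s' => (icdf μ s', icdf ν s')) ⁻¹'
      {p : ℝ × ℝ | s < p.1 ∧ t < p.2}) ∩ Ioo 0 1) ≤ volume (Ico m 1) := measure_mono hsub2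
  rw [Real.volume_Ioo] at h1
  rw [Real.volume_Ico] at h2
  exact le_antisymm h2 h1


noncomputable def pi2 (xmin xmax : ℝ) : Measure (ℝ × ℝ) :=
  (volume.restrict (Icc xmin xmax)).prod (volume.restrict (Icc xmin xmax))

instance (xmin xmax : ℝ) : SFinite (pi2 xmin xmax) := by
  unfold pi2; infer_instance

lemma restrict_Iio_apply {a : ℝ} (ha : a ∈ Icc xmin xmax) :
    (volume.restrict (Icc xmin xmax)) (Iio a) = ENNReal.ofReal (a - xmin) := by
  rw [Measure.restrict_apply measurableSet_Iio]
  have : Iio a ∩ Icc xmin xmax = Ico xmin a := by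
    ext x
    constructor
    · rintro ⟨hx1, hx2⟩; exact ⟨hx2.1, hx1⟩
    · rintro ⟨hx1, hx2⟩; exact ⟨hx2, hx1, le_trans (le_of_lt hx2) ha.2⟩
  rw [this, Real.volume_Ico]

lemma pi2_Iio {a b : ℝ} (ha : a ∈ Icc xmin xmax) (hb : b ∈ Icc xmin xmax) :
    pi2 xmin xmax (Iio a ×ˢ Iio b) = ENNReal.ofReal ((a - xmin) * (b - xmin)) := by
  rw [pi2, Measure.prod_prod, restrict_Iio_apply ha, restrict_Iio_apply hb,
    ← ENNReal.ofReal_mul (sub_nonneg.2 ha.1)]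

lemma lint_eq (hμ : memP2 xmin xmax μ) (hν : memP2 xmin xmax ν) {π : Measure (ℝ × ℝ)}
    [IsProbabilityMeasure π] (h1 : π.map Prod.fst = μ) (h2 : π.map Prod.snd = ν) :
    ∫⁻ p, ENNReal.ofReal ((p.1 - xmin) * (p.2 - xmin)) ∂π =
      ∫⁻ q, π {p : ℝ × ℝ | q.1 < p.1 ∧ q.2 < p.2} ∂(pi2 xmin xmax) := by
  set f : (ℝ × ℝ) → (ℝ × ℝ) → ℝ≥0∞ :=
    fun p q => if q.1 < p.1 ∧ q.2 < p.2 then 1 else 0 with hf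
  have hDmeas : MeasurableSet {x : (ℝ×ℝ)×(ℝ×ℝ) | x.2.1 < x.1.1 ∧ x.2.2 < x.1.2} :=
    (measurableSet_lt (measurable_snd.fst) (measurable_fst.fst)).inter
      (measurableSet_lt (measurable_snd.snd) (measurable_fst.snd))
  have hunc : Measurable (Function.uncurry f) := by
    have he : Function.uncurry f = fun x : (ℝ×ℝ)×(ℝ×ℝ) =>
        if x.2.1 < x.1.1 ∧ x.2.2 < x.1.2 then (1:ℝ≥0∞) else 0 := rfl
    rw [he]
    exact Measurable.ite hDmeas measurable_const measurable_const
  have inner1 : ∀ p : ℝ × ℝ, ∫⁻ q, f p q ∂(pi2 xmin xmax) =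
      pi2 xmin xmax (Iio p.1 ×ˢ Iio p.2) := by
    intro p
    have he : (fun q => f p q) = Set.indicator (Iio p.1 ×ˢ Iio p.2) (1 : ℝ×ℝ → ℝ≥0∞) := by
      funext q
      simp only [hf, Set.indicator_apply, mem_prod, mem_Iio, Pi.one_apply]
    rw [he, lintegral_indicator_one (measurableSet_Iio.prod measurableSet_Iio)]
  have inner2 : ∀ q : ℝ × ℝ, ∫⁻ p, f p q ∂π = π {p : ℝ × ℝ | q.1 < p.1 ∧ q.2 < p.2} := by
    intro q
    have he : (fun p => f p q) =
        Set.indicator {p : ℝ × ℝ | q.1 < p.1 ∧ q.2 < p.2} (1 : ℝ×ℝ → ℝ≥0∞) := by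
      funext p
      simp only [hf, Set.indicator_apply, mem_setOf_eq, Pi.one_apply]
    rw [he, lintegral_indicator_one
      (by rw [setOf_eq_prod]; exact measurableSet_Ioi.prod measurableSet_Ioi)]
  have step1 : ∫⁻ p, ENNReal.ofReal ((p.1 - xmin) * (p.2 - xmin)) ∂π =
      ∫⁻ p, ∫⁻ q, f p q ∂(pi2 xmin xmax) ∂π := by
    refine lintegral_congr_ae ?_
    filter_upwards [coupl_fst hμ h1, coupl_snd hν h2] with p hp1 hp2
    rw [inner1 p, pi2_Iio hp1 hp2]
  rw [step1, lintegral_lintegral_swap hunc.aemeasurable]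
  exact lintegral_congr (fun q => inner2 q)

lemma bound_aux {x y : ℝ} (hx : x ∈ Icc xmin xmax) (hy : y ∈ Icc xmin xmax) :
    |(x - xmin) * (y - xmin)| ≤ (xmax - xmin) ^ 2 := by
  rw [abs_mul, abs_of_nonneg (sub_nonneg.2 hx.1), abs_of_nonneg (sub_nonneg.2 hy.1), sq]
  exact mul_le_mul (by linarith [hx.2]) (by linarith [hy.2]) (by linarith [hy.1])
    (by linarith [hx.1, hx.2])

lemma K_le (hμ : memP2 xmin xmax μ) (hν : memP2 xmin xmax ν) {π : Measure (ℝ × ℝ)}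
    [IsProbabilityMeasure π] (h1 : π.map Prod.fst = μ) (h2 : π.map Prod.snd = ν) :
    ∫ p, (p.1 - xmin) * (p.2 - xmin) ∂π ≤
      ∫ p, (p.1 - xmin) * (p.2 - xmin) ∂(copi μ ν) := by
  haveI := copi_prob hμ hν
  have hmeas : Measurable fun p : ℝ × ℝ => (p.1 - xmin) * (p.2 - xmin) :=
    (measurable_fst.sub measurable_const).mul (measurable_snd.sub measurable_const)
  have hae1 : 0 ≤ᵐ[π] fun p : ℝ × ℝ => (p.1 - xmin) * (p.2 - xmin) := by
    filter_upwards [coupl_fst hμ h1, coupl_snd hν h2] with p hp1 hp2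
    exact mul_nonneg (sub_nonneg.2 hp1.1) (sub_nonneg.2 hp2.1)
  have hae2 : 0 ≤ᵐ[copi μ ν] fun p : ℝ × ℝ => (p.1 - xmin) * (p.2 - xmin) := by
    filter_upwards [coupl_fst hμ (copi_fst hμ hν), coupl_snd hν (copi_snd hμ hν)] with p hp1 hp2
    exact mul_nonneg (sub_nonneg.2 hp1.1) (sub_nonneg.2 hp2.1)
  have hint2 : Integrable (fun p : ℝ × ℝ => (p.1 - xmin) * (p.2 - xmin)) (copi μ ν) := by
    refine bdd_integrable hmeas.aestronglyMeasurable (C := (xmax - xmin) ^ 2) ?_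
    filter_upwards [coupl_fst hμ (copi_fst hμ hν), coupl_snd hν (copi_snd hμ hν)] with p hp1 hp2
    exact bound_aux hp1 hp2
  rw [integral_eq_lintegral_of_nonneg_ae hae1 hmeas.aestronglyMeasurable,
    integral_eq_lintegral_of_nonneg_ae hae2 hmeas.aestronglyMeasurable]
  refine ENNReal.toReal_mono hint2.lintegral_lt_top.ne ?_
  rw [lint_eq hμ hν h1 h2, lint_eq hμ hν (copi_fst hμ hν) (copi_snd hμ hν)]
  refine lintegral_mono (fun q => ?_)
  rw [copi_apply hμ hν q.1 q.2]
  exact coupling_le hμ hν h1 h2 q.1 q.2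


lemma integral_comp_fst {π : Measure (ℝ × ℝ)} (h1 : π.map Prod.fst = μ) {g : ℝ → ℝ}
    (hg : Measurable g) : ∫ p, g p.1 ∂π = ∫ x, g x ∂μ := by
  rw [← h1, integral_map measurable_fst.aemeasurable hg.aestronglyMeasurable]

lemma integral_comp_snd {π : Measure (ℝ × ℝ)} (h2 : π.map Prod.snd = ν) {g : ℝ → ℝ}
    (hg : Measurable g) : ∫ p, g p.2 ∂π = ∫ x, g x ∂ν := by
  rw [← h2, integral_map measurable_snd.aemeasurable hg.aestronglyMeasurable]

lemma expand_coupling (hμ : memP2 xmin xmax μ) (hν : memP2 xmin xmax ν)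
    {ρ : Measure (ℝ × ℝ)} [IsProbabilityMeasure ρ]
    (h1 : ρ.map Prod.fst = μ) (h2 : ρ.map Prod.snd = ν) :
    ∫ p, (p.1 - p.2) ^ 2 ∂ρ = (∫ x, (x - xmin) ^ 2 ∂μ) + (∫ y, (y - xmin) ^ 2 ∂ν)
      - 2 * ∫ p, (p.1 - xmin) * (p.2 - xmin) ∂ρ := by
  have m1 : Measurable fun p : ℝ × ℝ => (p.1 - xmin) ^ 2 :=
    (measurable_fst.sub measurable_const).pow_const 2
  have m2 : Measurable fun p : ℝ × ℝ => (p.2 - xmin) ^ 2 :=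
    (measurable_snd.sub measurable_const).pow_const 2
  have m3 : Measurable fun p : ℝ × ℝ => (p.1 - xmin) * (p.2 - xmin) :=
    (measurable_fst.sub measurable_const).mul (measurable_snd.sub measurable_const)
  have hfst := coupl_fst hμ h1
  have hsnd := coupl_snd hν h2
  have i1 : Integrable (fun p : ℝ × ℝ => (p.1 - xmin) ^ 2) ρ := by
    refine bdd_integrable m1.aestronglyMeasurable (C := (xmax - xmin) ^ 2) ?_
    filter_upwards [hfst] with p hp
    simpa [sq] using bound_aux hp hp
  have i2 : Integrable (fun p : ℝ × ℝ => (p.2 - xmin) ^ 2) ρ := by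
    refine bdd_integrable m2.aestronglyMeasurable (C := (xmax - xmin) ^ 2) ?_
    filter_upwards [hsnd] with p hp
    simpa [sq] using bound_aux hp hp
  have i3 : Integrable (fun p : ℝ × ℝ => (p.1 - xmin) * (p.2 - xmin)) ρ := by
    refine bdd_integrable m3.aestronglyMeasurable (C := (xmax - xmin) ^ 2) ?_
    filter_upwards [hfst, hsnd] with p hp1 hp2
    exact bound_aux hp1 hp2
  have hpt : (fun p : ℝ × ℝ => (p.1 - p.2) ^ 2) = fun p : ℝ × ℝ =>
      (p.1 - xmin) ^ 2 + (p.2 - xmin) ^ 2 - 2 * ((p.1 - xmin) * (p.2 - xmin)) := by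
    funext p; ring
  have i12 : Integrable (fun p : ℝ × ℝ => (p.1 - xmin) ^ 2 + (p.2 - xmin) ^ 2) ρ := i1.add i2
  have i32 : Integrable (fun p : ℝ × ℝ => 2 * ((p.1 - xmin) * (p.2 - xmin))) ρ :=
    i3.const_mul 2
  rw [hpt, integral_sub i12 i32, integral_add i1 i2, MeasureTheory.integral_const_mul,
    integral_comp_fst (g := fun x => (x - xmin) ^ 2) h1 (by fun_prop),
    integral_comp_snd (g := fun x => (x - xmin) ^ 2) h2 (by fun_prop)]

lemma copi_integral (hμ : memP2 xmin xmax μ) (hν : memP2 xmin xmax ν) :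
    ∫ p, (p.1 - p.2) ^ 2 ∂(copi μ ν) = ∫ s in Ioo (0:ℝ) 1, (icdf μ s - icdf ν s) ^ 2 := by
  have hmeas : Measurable fun p : ℝ × ℝ => (p.1 - p.2) ^ 2 :=
    (measurable_fst.sub measurable_snd).pow_const 2
  rw [copi, integral_map (pair_aemeasurable hμ hν) hmeas.aestronglyMeasurable]

lemma integral_sq_ge (hμ : memP2 xmin xmax μ) (hν : memP2 xmin xmax ν)
    {π : Measure (ℝ × ℝ)} [IsProbabilityMeasure π]
    (h1 : π.map Prod.fst = μ) (h2 : π.map Prod.snd = ν) :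
    ∫ s in Ioo (0:ℝ) 1, (icdf μ s - icdf ν s) ^ 2 ≤ ∫ p, (p.1 - p.2) ^ 2 ∂π := by
  haveI := copi_prob hμ hν
  rw [← copi_integral hμ hν, expand_coupling hμ hν h1 h2,
    expand_coupling hμ hν (copi_fst hμ hν) (copi_snd hμ hν)]
  have := K_le hμ hν h1 h2
  linarith

lemma W2_eq (hμ : memP2 xmin xmax μ) (hν : memP2 xmin xmax ν) :
    W2 μ ν = (∫ s in Ioo (0:ℝ) 1, (icdf μ s - icdf ν s) ^ 2) ^ (1/2 : ℝ) := by
  have hA0 : 0 ≤ ∫ s in Ioo (0:ℝ) 1, (icdf μ s - icdf ν s) ^ 2 :=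
    integral_nonneg (fun s => sq_nonneg _)
  haveI := copi_prob hμ hν
  have hmem : (∫ s in Ioo (0:ℝ) 1, (icdf μ s - icdf ν s) ^ 2) ^ (1/2 : ℝ) ∈
      {r | ∃ π : Measure (ℝ × ℝ), IsProbabilityMeasure π ∧
        π.map Prod.fst = μ ∧ π.map Prod.snd = ν ∧
        r = (∫ p, (p.1 - p.2) ^ 2 ∂π) ^ (1 / 2 : ℝ)} :=
    ⟨copi μ ν, copi_prob hμ hν, copi_fst hμ hν, copi_snd hμ hν,
      by rw [copi_integral hμ hν]⟩
  have hlb : ∀ r ∈ {r | ∃ π : Measure (ℝ × ℝ), IsProbabilityMeasure π ∧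
      π.map Prod.fst = μ ∧ π.map Prod.snd = ν ∧
      r = (∫ p, (p.1 - p.2) ^ 2 ∂π) ^ (1 / 2 : ℝ)},
      (∫ s in Ioo (0:ℝ) 1, (icdf μ s - icdf ν s) ^ 2) ^ (1/2 : ℝ) ≤ r := by
    rintro r ⟨π, hπ, h1, h2, rfl⟩
    haveI := hπ
    exact Real.rpow_le_rpow hA0 (integral_sq_ge hμ hν h1 h2) (by norm_num)
  exact le_antisymm (csInf_le ⟨_, hlb⟩ hmem) (le_csInf ⟨_, hmem⟩ hlb)

lemma W2_sq (hμ : memP2 xmin xmax μ) (hν : memP2 xmin xmax ν) :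
    W2 μ ν ^ 2 = ∫ s in Ioo (0:ℝ) 1, (icdf μ s - icdf ν s) ^ 2 := by
  have hA0 : 0 ≤ ∫ s in Ioo (0:ℝ) 1, (icdf μ s - icdf ν s) ^ 2 :=
    integral_nonneg (fun s => sq_nonneg _)
  rw [W2_eq hμ hν, ← Real.sqrt_eq_rpow, Real.sq_sqrt hA0]


lemma abs_sq_diff_le {a b : ℝ} (ha : a ∈ Icc xmin xmax) (hb : b ∈ Icc xmin xmax) :
    |(a - b) ^ 2| ≤ (xmax - xmin) ^ 2 := by
  rw [abs_of_nonneg (sq_nonneg _)]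
  have h1 : |a - b| ≤ xmax - xmin :=
    abs_le.2 ⟨by linarith [ha.1, hb.2], by linarith [ha.2, hb.1]⟩
  calc (a - b) ^ 2 = |a - b| ^ 2 := (sq_abs _).symm
  _ ≤ (xmax - xmin) ^ 2 := pow_le_pow_left₀ (abs_nonneg _) h1 2

lemma sq_diff_integrable (hw : memP2 xmin xmax μ) (hw' : memP2 xmin xmax ν) :
    Integrable (fun s => (icdf μ s - icdf ν s) ^ 2) (volume.restrict (Ioo (0:ℝ) 1)) := by
  refine bdd_integrable
    (((icdf_aemeasurable hw).sub (icdf_aemeasurable hw')).pow_const 2).aestronglyMeasurable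
    (C := (xmax - xmin) ^ 2) ?_
  rw [ae_restrict_iff' measurableSet_Ioo]
  exact ae_of_all _ (fun s hs => abs_sq_diff_le (icdf_mem hw hs) (icdf_mem hw' hs))

end WassAux

/-- The Wasserstein barycenter of u₁,…,uₙ with weights λ₁,…,λₙ exists, is the unique
minimizer of v ↦ ∑ᵢ λᵢ W₂(v,uᵢ)², and its quantile function is ∑ᵢ λᵢ icdf_{uᵢ}. -/
theorem stmt4 (xmin xmax : ℝ) (hx : xmin < xmax) (n : ℕ) (hn : 0 < n)
    (u : Fin n → Measure ℝ) (hu : ∀ i, memP2 xmin xmax (u i))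
    (lam : Fin n → ℝ) (hl : ∀ i, 0 ≤ lam i) (hsum : ∑ i, lam i = 1) :
    ∃ v : Measure ℝ, memP2 xmin xmax v ∧
      (∀ v', memP2 xmin xmax v' →
        ∑ i, lam i * (W2 v (u i)) ^ 2 ≤ ∑ i, lam i * (W2 v' (u i)) ^ 2) ∧
      (∀ v', memP2 xmin xmax v' →
        (∀ v'', memP2 xmin xmax v'' →
          ∑ i, lam i * (W2 v' (u i)) ^ 2 ≤ ∑ i, lam i * (W2 v'' (u i)) ^ 2) → v' = v) ∧
      (∀ s ∈ Ioo (0 : ℝ) 1, icdf v s = ∑ i, lam i * icdf (u i) s) := by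
  haveI : Nonempty (Fin n) := ⟨⟨0, hn⟩⟩
  set g : ℝ → ℝ := fun s => ∑ i, lam i * icdf (u i) s with hg
  have hmono : MonotoneOn g (Ioo (0:ℝ) 1) := by
    intro s hs t ht hst
    exact Finset.sum_le_sum fun i _ =>
      mul_le_mul_of_nonneg_left (WassAux.icdf_monoOn (hu i) hs ht hst) (hl i)
  have hrc : ∀ t ∈ Ioo (0:ℝ) 1, ∀ ε > (0:ℝ), ∃ s ∈ Ioo t 1, g s ≤ g t + ε := by
    intro t ht ε hε
    choose sf hsf1 hsf2 using fun i => WassAux.icdf_rc (hu i) ht hε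
    set s0 := Finset.univ.inf' Finset.univ_nonempty sf with hs0
    have hs0t : t < s0 := (Finset.lt_inf'_iff _).2 fun i _ => (hsf1 i).1
    have hs0mem : s0 ∈ Ioo t 1 := ⟨hs0t,
      lt_of_le_of_lt (Finset.inf'_le _ (Finset.mem_univ (Classical.arbitrary (Fin n))))
        (hsf1 _).2⟩
    refine ⟨s0, hs0mem, ?_⟩
    have hs0I : s0 ∈ Ioo (0:ℝ) 1 := ⟨lt_trans ht.1 hs0t, hs0mem.2⟩
    have hkey : ∀ i, icdf (u i) s0 ≤ icdf (u i) t + ε := fun i =>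
      le_trans (WassAux.icdf_monoOn (hu i) hs0I ⟨lt_trans ht.1 (hsf1 i).1, (hsf1 i).2⟩
        (Finset.inf'_le _ (Finset.mem_univ i))) (hsf2 i)
    calc g s0 ≤ ∑ i, lam i * (icdf (u i) t + ε) :=
      Finset.sum_le_sum fun i _ => mul_le_mul_of_nonneg_left (hkey i) (hl i)
    _ = g t + ε := by
      rw [Finset.sum_congr rfl fun (i : Fin n) _ => mul_add (lam i) (icdf (u i) t) ε,
        Finset.sum_add_distrib, ← Finset.sum_mul, hsum, one_mul]
  have hgmem : ∀ s ∈ Ioo (0:ℝ) 1, g s ∈ Icc xmin xmax := by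
    intro s hs
    constructor
    · calc xmin = ∑ i : Fin n, lam i * xmin := by rw [← Finset.sum_mul, hsum, one_mul]
      _ ≤ g s := Finset.sum_le_sum fun i _ =>
        mul_le_mul_of_nonneg_left (WassAux.icdf_mem (hu i) hs).1 (hl i)
    · calc g s ≤ ∑ i : Fin n, lam i * xmax := Finset.sum_le_sum fun i _ =>
        mul_le_mul_of_nonneg_left (WassAux.icdf_mem (hu i) hs).2 (hl i)
      _ = xmax := by rw [← Finset.sum_mul, hsum, one_mul]
  set v : Measure ℝ := (volume.restrict (Ioo (0:ℝ) 1)).map g with hv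
  have hamg : AEMeasurable g (volume.restrict (Ioo (0:ℝ) 1)) :=
    aemeasurable_restrict_of_monotoneOn measurableSet_Ioo hmono
  haveI hvp : IsProbabilityMeasure v := Measure.isProbabilityMeasure_map hamg
  have hicdf_v : ∀ t ∈ Ioo (0:ℝ) 1, icdf v t = g t := fun t ht =>
    WassAux.icdf_map_eq hmono hrc ht
  have haemem : ∀ᵐ x ∂v, x ∈ Icc xmin xmax := by
    rw [hv]
    refine (ae_map_iff hamg (p := fun y => y ∈ Icc xmin xmax) measurableSet_Icc).2 ?_
    rw [ae_restrict_iff' measurableSet_Ioo]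
    exact ae_of_all _ hgmem
  have hvmem : memP2 xmin xmax v := by
    refine ⟨hvp, haemem, ?_⟩
    refine WassAux.bdd_integrable (measurable_id.pow_const 2).aestronglyMeasurable
      (C := (max |xmin| |xmax|) ^ 2) ?_
    filter_upwards [haemem] with x hx
    have h1 : |x| ≤ max |xmin| |xmax| := abs_le.2
      ⟨by have := neg_abs_le xmin; have := le_max_left |xmin| |xmax|; linarith [hx.1],
       by have := le_abs_self xmax; have := le_max_right |xmin| |xmax|; linarith [hx.2]⟩
    have h2 : |x ^ 2| ≤ (max |xmin| |xmax|) ^ 2 := by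
      rw [abs_pow]
      exact pow_le_pow_left₀ (abs_nonneg _) h1 2
    simpa using h2
  have hGint : ∀ (w : Measure ℝ), memP2 xmin xmax w → ∀ i : Fin n,
      Integrable (fun s => lam i * (icdf w s - icdf (u i) s) ^ 2)
        (volume.restrict (Ioo (0:ℝ) 1)) :=
    fun w hw i => (WassAux.sq_diff_integrable hw (hu i)).const_mul _
  have hstep1 : ∀ (w : Measure ℝ), memP2 xmin xmax w →
      ∑ i, lam i * W2 w (u i) ^ 2 =
        ∫ s in Ioo (0:ℝ) 1, ∑ i, lam i * (icdf w s - icdf (u i) s) ^ 2 := by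
    intro w hw
    rw [integral_finset_sum _ (fun i _ => hGint w hw i)]
    refine Finset.sum_congr rfl fun i _ => ?_
    rw [WassAux.W2_sq hw (hu i), MeasureTheory.integral_const_mul]
  have hdecomp : ∀ (w : Measure ℝ), memP2 xmin xmax w →
      ∑ i, lam i * W2 w (u i) ^ 2 =
        (∫ s in Ioo (0:ℝ) 1, (icdf w s - icdf v s) ^ 2) + ∑ i, lam i * W2 v (u i) ^ 2 := by
    intro w hw
    rw [hstep1 w hw, hstep1 v hvmem]
    have hpt : EqOn (fun s => ∑ i, lam i * (icdf w s - icdf (u i) s) ^ 2)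
        (fun s => (icdf w s - icdf v s) ^ 2 + ∑ i, lam i * (icdf v s - icdf (u i) s) ^ 2)
        (Ioo (0:ℝ) 1) := by
      intro s hs
      have hvg : icdf v s = g s := hicdf_v s hs
      simp only [hvg]
      have h0 : ∑ i, lam i * (g s - icdf (u i) s) = 0 := by
        rw [Finset.sum_congr rfl fun (i : Fin n) _ => mul_sub (lam i) (g s) (icdf (u i) s),
          Finset.sum_sub_distrib, ← Finset.sum_mul, hsum, one_mul, hg]
        exact sub_self _
      have hexp : ∀ i : Fin n, lam i * (icdf w s - icdf (u i) s) ^ 2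
          = lam i * (g s - icdf (u i) s) ^ 2 + (icdf w s - g s) ^ 2 * lam i
            + (2 * (icdf w s - g s)) * (lam i * (g s - icdf (u i) s)) := fun i => by ring
      rw [Finset.sum_congr rfl fun i _ => hexp i, Finset.sum_add_distrib,
        Finset.sum_add_distrib, ← Finset.mul_sum, ← Finset.mul_sum, h0, mul_zero, add_zero,
        hsum, mul_one]
      ring
    rw [setIntegral_congr_fun measurableSet_Ioo hpt,
      integral_add (WassAux.sq_diff_integrable hw hvmem)
        (integrable_finset_sum _ (fun i _ => hGint v hvmem i))]
  refine ⟨v, hvmem, ?_, ?_, fun s hs => hicdf_v s hs⟩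
  · intro w hw
    rw [hdecomp w hw]
    have h0 : 0 ≤ ∫ s in Ioo (0:ℝ) 1, (icdf w s - icdf v s) ^ 2 :=
      integral_nonneg fun s => sq_nonneg _
    linarith
  · intro w hw hmin
    have h1 := hmin v hvmem
    rw [hdecomp w hw] at h1
    have h2 : ∫ s in Ioo (0:ℝ) 1, (icdf w s - icdf v s) ^ 2 = 0 :=
      le_antisymm (by linarith) (integral_nonneg fun s => sq_nonneg _)
    have h3 : (fun s => (icdf w s - icdf v s) ^ 2)
        =ᵐ[volume.restrict (Ioo (0:ℝ) 1)] 0 :=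
      (integral_eq_zero_iff_of_nonneg (fun s => sq_nonneg _)
        (WassAux.sq_diff_integrable hw hvmem)).1 h2
    have h4 : icdf w =ᵐ[volume.restrict (Ioo (0:ℝ) 1)] icdf v := by
      filter_upwards [h3] with s hs
      have : (icdf w s - icdf v s) ^ 2 = 0 := hs
      have := sq_eq_zero_iff.1 this
      linarith
    calc w = (volume.restrict (Ioo (0:ℝ) 1)).map (icdf w) := (WassAux.map_icdf hw).symm
    _ = (volume.restrict (Ioo (0:ℝ) 1)).map (icdf v) := Measure.map_congr h4
    _ = v := WassAux.map_icdf hvmem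
end

section
/- Let w ∈ P₂(Ω) and define Exp_w(f) = icdf^{−1}(icdf_w + f) on O_w = {f ∈ L²([0,1]) : icdf_w + f is the quantile function of some measure in P₂(Ω)}, and Log_w(u) = icdf_u − icdf_w. Then Exp_w is a bijection from O_w onto P₂(Ω) with inverse Log_w, and W₂(u,v) = ‖Log_w(u) − Log_w(v)‖_{L²([0,1])} for all u, v ∈ P₂(Ω). -/
open MeasureTheory Set Filter Topology

namespace Stmt19Aux

variable {xmin xmax : ℝ} {u : Measure ℝ}

lemma cdf'_eq (u : Measure ℝ) [IsProbabilityMeasure u] (x : ℝ) :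
    cdf' u x = ProbabilityTheory.cdf u x := (ProbabilityTheory.cdf_eq_real u x).symm

lemma cdf'_mono (hu : memP2 xmin xmax u) : Monotone (cdf' u) := by
  have : IsProbabilityMeasure u := hu.1
  intro a b hab
  rw [cdf'_eq, cdf'_eq]
  exact ProbabilityTheory.monotone_cdf u hab

lemma cdf'_le_one (hu : memP2 xmin xmax u) (x : ℝ) : cdf' u x ≤ 1 := by
  have : IsProbabilityMeasure u := hu.1
  rw [cdf'_eq]; exact ProbabilityTheory.cdf_le_one u x

lemma measure_compl_Icc (hu : memP2 xmin xmax u) : u ((Icc xmin xmax)ᶜ) = 0 := by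
  have := hu.2.1
  rw [ae_iff] at this
  simpa [compl_def] using this

lemma cdf'_of_lt (hu : memP2 xmin xmax u) {x : ℝ} (hx : x < xmin) : cdf' u x = 0 := by
  have h0 : u (Iic x) = 0 := by
    refine measure_mono_null ?_ (measure_compl_Icc hu)
    intro y hy
    simp only [mem_compl_iff, mem_Icc, not_and_or, not_le]
    exact Or.inl (lt_of_le_of_lt hy hx)
  simp [cdf', h0]

lemma cdf'_xmax (hu : memP2 xmin xmax u) : cdf' u xmax = 1 := by
  have : IsProbabilityMeasure u := hu.1
  have h0 : u (Ioi xmax) = 0 := by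
    refine measure_mono_null ?_ (measure_compl_Icc hu)
    intro y hy
    simp only [mem_compl_iff, mem_Icc, not_and_or, not_le]
    exact Or.inr (mem_Ioi.mp hy)
  have : u (Iic xmax) = 1 := by
    have h2 := prob_compl_eq_one_sub (μ := u) (measurableSet_Ioi (a := xmax))
    rw [compl_Ioi] at h2
    rw [h2, h0]; simp
  simp [cdf', this]

lemma bddBelow_S (hu : memP2 xmin xmax u) {s : ℝ} (hs : 0 ≤ s) :
    {x | s < cdf' u x} ⊆ Ici xmin := by
  intro x hx
  by_contra h
  rw [mem_Ici, not_le] at h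
  rw [mem_setOf_eq, cdf'_of_lt hu h] at hx
  exact absurd (lt_of_le_of_lt hs hx) (lt_irrefl 0)

lemma mem_S (hu : memP2 xmin xmax u) {s : ℝ} (hs : s < 1) : xmax ∈ {x | s < cdf' u x} := by
  rw [mem_setOf_eq, cdf'_xmax hu]; exact hs

lemma icdf_mem (hu : memP2 xmin xmax u) {s : ℝ} (hs0 : 0 ≤ s) (hs1 : s < 1) :
    icdf u s ∈ Icc xmin xmax := by
  constructor
  · exact le_csInf ⟨xmax, mem_S hu hs1⟩ (fun x hx => bddBelow_S hu hs0 hx)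
  · exact csInf_le ⟨xmin, fun x hx => bddBelow_S hu hs0 hx⟩ (mem_S hu hs1)

lemma icdf_mono (hu : memP2 xmin xmax u) {s t : ℝ} (hs0 : 0 ≤ s) (hst : s ≤ t) (ht1 : t < 1) :
    icdf u s ≤ icdf u t := by
  refine csInf_le_csInf ⟨xmin, fun x hx => bddBelow_S hu hs0 hx⟩ ⟨xmax, mem_S hu ht1⟩ ?_
  intro x hx
  exact lt_of_le_of_lt hst hx

/-- for `s ∈ (0,1)`: `s < cdf' u x → icdf u s ≤ x` -/
lemma icdf_le_of_lt_cdf (hu : memP2 xmin xmax u) {s x : ℝ} (hs0 : 0 ≤ s)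
    (h : s < cdf' u x) : icdf u s ≤ x :=
  csInf_le ⟨xmin, fun y hy => bddBelow_S hu hs0 hy⟩ h

lemma exists_cdf'_lt (hu : memP2 xmin xmax u) {x r : ℝ} (h : cdf' u x < r) :
    ∃ y, x < y ∧ cdf' u y < r := by
  have : IsProbabilityMeasure u := hu.1
  have hc : ContinuousWithinAt (ProbabilityTheory.cdf u) (Ioi x) x :=
    ((ProbabilityTheory.cdf u).right_continuous x).mono Ioi_subset_Ici_self
  rw [cdf'_eq] at h
  have hev : ∀ᶠ y in 𝓝[>] x, ProbabilityTheory.cdf u y < r := hc.eventually_lt_const h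
  obtain ⟨y, hy, hy'⟩ := (hev.and self_mem_nhdsWithin).exists
  exact ⟨y, hy', by rw [cdf'_eq]; exact hy⟩

lemma le_cdf_of_icdf_le (hu : memP2 xmin xmax u) {s x : ℝ} (hs1 : s < 1)
    (h : icdf u s ≤ x) : s ≤ cdf' u x := by
  by_contra hc
  push_neg at hc
  obtain ⟨y, hxy, hy⟩ := exists_cdf'_lt hu hc
  have : y ≤ icdf u s := by
    refine le_csInf ⟨xmax, mem_S hu hs1⟩ ?_
    intro z hz
    by_contra hzy
    push_neg at hzy
    exact absurd (lt_of_lt_of_le hz (cdf'_mono hu hzy.le)) (not_lt.mpr hy.le)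
  linarith

/-- Monotone modification of the quantile function. -/
noncomputable def Q (xmin xmax : ℝ) (u : Measure ℝ) (s : ℝ) : ℝ :=
  if s ≤ 0 then xmin else if 1 ≤ s then xmax else icdf u s

lemma Q_eq_icdf {s : ℝ} (hs : s ∈ Ioo (0:ℝ) 1) : Q xmin xmax u s = icdf u s := by
  rw [Q, if_neg (by linarith [hs.1]), if_neg (by linarith [hs.2])]

lemma Q_mem (hx : xmin ≤ xmax) (hu : memP2 xmin xmax u) (s : ℝ) :
    Q xmin xmax u s ∈ Icc xmin xmax := by
  rw [Q]
  split_ifs with h1 h2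
  · exact ⟨le_refl _, hx⟩
  · exact ⟨hx, le_refl _⟩
  · exact icdf_mem hu (by linarith) (by linarith)

lemma Q_mono (hx : xmin ≤ xmax) (hu : memP2 xmin xmax u) : Monotone (Q xmin xmax u) := by
  intro s t hst
  by_cases hs1 : s ≤ 0
  · rw [Q, if_pos hs1]; exact (Q_mem hx hu t).1
  · by_cases ht2 : 1 ≤ t
    · have : Q xmin xmax u t = xmax := by rw [Q, if_neg (by linarith), if_pos ht2]
      rw [this]
      exact (Q_mem hx hu s).2
    · push_neg at hs1 ht2
      rw [Q_eq_icdf ⟨hs1, lt_of_le_of_lt hst ht2⟩, Q_eq_icdf ⟨lt_of_lt_of_le hs1 hst, ht2⟩]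
      exact icdf_mono hu hs1.le hst ht2

lemma Q_measurable (hx : xmin ≤ xmax) (hu : memP2 xmin xmax u) :
    Measurable (Q xmin xmax u) := (Q_mono hx hu).measurable


/-- The uniform measure on `(0,1)`. -/
noncomputable def Leb01 : Measure ℝ := volume.restrict (Ioo (0:ℝ) 1)

instance : IsProbabilityMeasure (Leb01) := ⟨by simp [Leb01, Real.volume_Ioo]⟩

lemma map_Q (hx : xmin ≤ xmax) (hu : memP2 xmin xmax u) :
    Leb01.map (Q xmin xmax u) = u := by
  have hum : IsProbabilityMeasure u := hu.1
  have hQm : Measurable (Q xmin xmax u) := Q_measurable hx hu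
  have : IsProbabilityMeasure (Leb01.map (Q xmin xmax u)) :=
    Measure.isProbabilityMeasure_map hQm.aemeasurable
  refine Measure.ext_of_Iic _ _ (fun x => ?_)
  rw [Measure.map_apply hQm measurableSet_Iic]
  have h01 : cdf' u x ≤ 1 := cdf'_le_one hu x
  have key : Leb01 (Q xmin xmax u ⁻¹' Iic x) = ENNReal.ofReal (cdf' u x) := by
    rw [Leb01, Measure.restrict_apply (hQm measurableSet_Iic)]
    refine le_antisymm ?_ ?_
    · have hsub : Q xmin xmax u ⁻¹' Iic x ∩ Ioo 0 1 ⊆ Ioc 0 (cdf' u x) := by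
        intro r ⟨hr1, hr2⟩
        rw [mem_preimage, mem_Iic, Q_eq_icdf hr2] at hr1
        exact ⟨hr2.1, le_cdf_of_icdf_le hu hr2.2 hr1⟩
      calc volume (Q xmin xmax u ⁻¹' Iic x ∩ Ioo 0 1) ≤ volume (Ioc 0 (cdf' u x)) :=
            measure_mono hsub
        _ = ENNReal.ofReal (cdf' u x) := by rw [Real.volume_Ioc, sub_zero]
    · have hsub : Ioo 0 (cdf' u x) ⊆ Q xmin xmax u ⁻¹' Iic x ∩ Ioo 0 1 := by
        intro r ⟨hr1, hr2⟩
        have hr01 : r ∈ Ioo (0:ℝ) 1 := ⟨hr1, lt_of_lt_of_le hr2 h01⟩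
        refine ⟨?_, hr01⟩
        rw [mem_preimage, mem_Iic, Q_eq_icdf hr01]
        exact icdf_le_of_lt_cdf hu hr1.le hr2
      calc ENNReal.ofReal (cdf' u x) = volume (Ioo 0 (cdf' u x)) := by
            rw [Real.volume_Ioo, sub_zero]
        _ ≤ volume (Q xmin xmax u ⁻¹' Iic x ∩ Ioo 0 1) := measure_mono hsub
  rw [key, cdf', ENNReal.ofReal_toReal (measure_ne_top u _)]


section Coupling

variable {π : Measure (ℝ × ℝ)} {v : Measure ℝ}

lemma ae_fst_mem (hu : memP2 xmin xmax u) (h1 : π.map Prod.fst = u) :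
    ∀ᵐ p ∂π, p.1 ∈ Icc xmin xmax := by
  rw [ae_iff]
  have h : {p : ℝ × ℝ | ¬ p.1 ∈ Icc xmin xmax} = Prod.fst ⁻¹' (Icc xmin xmax)ᶜ := rfl
  rw [h, ← Measure.map_apply measurable_fst measurableSet_Icc.compl, h1]
  exact measure_compl_Icc hu

lemma ae_snd_mem (hv : memP2 xmin xmax v) (h2 : π.map Prod.snd = v) :
    ∀ᵐ p ∂π, p.2 ∈ Icc xmin xmax := by
  rw [ae_iff]
  have h : {p : ℝ × ℝ | ¬ p.2 ∈ Icc xmin xmax} = Prod.snd ⁻¹' (Icc xmin xmax)ᶜ := rfl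
  rw [h, ← Measure.map_apply measurable_snd measurableSet_Icc.compl, h2]
  exact measure_compl_Icc hv

lemma measurableSet_A : MeasurableSet {x : (ℝ × ℝ) × (ℝ × ℝ) | x.2.1 < x.1.1 ∧ x.2.2 < x.1.2} := by
  exact (measurableSet_lt (measurable_fst.comp measurable_snd)
      (measurable_fst.comp measurable_fst)).inter
    (measurableSet_lt (measurable_snd.comp measurable_snd)
      (measurable_snd.comp measurable_fst))

/-- Hoeffding-type representation of the (shifted) cross moment. -/
lemma CC_eq {m : ℝ} [SFinite π] (hae : ∀ᵐ p ∂π, m ≤ p.1 ∧ m ≤ p.2) :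
    ∫⁻ p, ENNReal.ofReal ((p.1 - m) * (p.2 - m)) ∂π
      = ∫⁻ q, π (Ioi q.1 ×ˢ Ioi q.2)
          ∂((volume.restrict (Ioi m)).prod (volume.restrict (Ioi m))) := by
  set μ2 : Measure (ℝ × ℝ) := (volume.restrict (Ioi m)).prod (volume.restrict (Ioi m)) with hμ2
  set A : Set ((ℝ × ℝ) × (ℝ × ℝ)) := {x | x.2.1 < x.1.1 ∧ x.2.2 < x.1.2} with hA
  have hAm : MeasurableSet A := measurableSet_A
  have step1 : ∫⁻ p, ENNReal.ofReal ((p.1 - m) * (p.2 - m)) ∂π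
      = ∫⁻ p, μ2 (Prod.mk p ⁻¹' A) ∂π := by
    refine lintegral_congr_ae ?_
    filter_upwards [hae] with p hp
    have hpre : Prod.mk p ⁻¹' A = Iio p.1 ×ˢ Iio p.2 := by
      ext q; simp [hA, and_comm]
    rw [hpre, hμ2, Measure.prod_prod, Measure.restrict_apply measurableSet_Iio,
      Measure.restrict_apply measurableSet_Iio, Iio_inter_Ioi, Iio_inter_Ioi,
      Real.volume_Ioo, Real.volume_Ioo, ENNReal.ofReal_mul (by linarith [hp.1])]
  rw [step1, ← Measure.prod_apply hAm, Measure.prod_apply_symm hAm]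
  refine lintegral_congr (fun q => ?_)
  have : (fun p => (p, q)) ⁻¹' A = Ioi q.1 ×ˢ Ioi q.2 := by
    ext p; simp [hA, Set.mem_prod]
  rw [this]

/-- Fréchet upper bound for the sections. -/
lemma section_le (hπ : IsProbabilityMeasure π) (h1 : π.map Prod.fst = u)
    (h2 : π.map Prod.snd = v) (a b : ℝ) :
    π (Ioi a ×ˢ Ioi b) ≤ min (u (Ioi a)) (v (Ioi b)) := by
  refine le_min ?_ ?_
  · rw [← h1, Measure.map_apply measurable_fst measurableSet_Ioi]
    exact measure_mono (fun p hp => hp.1)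
  · rw [← h2, Measure.map_apply measurable_snd measurableSet_Ioi]
    exact measure_mono (fun p hp => hp.2)

lemma upset_total {f g : ℝ → ℝ} (hf : Monotone f) (hg : Monotone g) (a b : ℝ) :
    f ⁻¹' Ioi a ⊆ g ⁻¹' Ioi b ∨ g ⁻¹' Ioi b ⊆ f ⁻¹' Ioi a := by
  by_contra h
  push_neg at h
  simp only [Set.not_subset] at h
  obtain ⟨⟨r, hr, hr'⟩, ⟨t, ht, ht'⟩⟩ := h
  rw [mem_preimage, mem_Ioi] at hr ht
  rw [mem_preimage, mem_Ioi, not_lt] at hr' ht'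
  rcases le_total r t with hrt | htr
  · exact absurd (lt_of_lt_of_le hr (le_trans (hf hrt) ht')) (lt_irrefl a)
  · exact absurd (lt_of_lt_of_le ht (le_trans (hg htr) hr')) (lt_irrefl b)

/-- The monotone coupling attains the Fréchet bound. -/
lemma section_eq (hx : xmin ≤ xmax) (hu : memP2 xmin xmax u) (hv : memP2 xmin xmax v) (a b : ℝ) :
    (Leb01.map (fun r => (Q xmin xmax u r, Q xmin xmax v r))) (Ioi a ×ˢ Ioi b)
      = min (u (Ioi a)) (v (Ioi b)) := by
  have hQu : Measurable (Q xmin xmax u) := Q_measurable hx hu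
  have hQv : Measurable (Q xmin xmax v) := Q_measurable hx hv
  have hT : Measurable (fun r => (Q xmin xmax u r, Q xmin xmax v r)) := hQu.prodMk hQv
  rw [Measure.map_apply hT (measurableSet_Ioi.prod measurableSet_Ioi)]
  have hpre : (fun r => (Q xmin xmax u r, Q xmin xmax v r)) ⁻¹' (Ioi a ×ˢ Ioi b)
      = (Q xmin xmax u ⁻¹' Ioi a) ∩ (Q xmin xmax v ⁻¹' Ioi b) := by
    ext r; simp [Set.mem_prod]
  have hLu : Leb01 (Q xmin xmax u ⁻¹' Ioi a) = u (Ioi a) := by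
    rw [← Measure.map_apply hQu measurableSet_Ioi, map_Q hx hu]
  have hLv : Leb01 (Q xmin xmax v ⁻¹' Ioi b) = v (Ioi b) := by
    rw [← Measure.map_apply hQv measurableSet_Ioi, map_Q hx hv]
  rw [hpre]
  rcases upset_total (Q_mono hx hu) (Q_mono hx hv) a b with hsub | hsub
  · rw [inter_eq_left.mpr hsub]
    have : Leb01 (Q xmin xmax u ⁻¹' Ioi a) ≤ Leb01 (Q xmin xmax v ⁻¹' Ioi b) :=
      measure_mono hsub
    rw [hLu, hLv] at this
    rw [hLu, min_eq_left this]
  · rw [inter_eq_right.mpr hsub]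
    have : Leb01 (Q xmin xmax v ⁻¹' Ioi b) ≤ Leb01 (Q xmin xmax u ⁻¹' Ioi a) :=
      measure_mono hsub
    rw [hLu, hLv] at this
    rw [hLv, min_eq_right this]

end Coupling


section Compare

variable {π : Measure (ℝ × ℝ)} {v : Measure ℝ}

lemma abs_le_B {x : ℝ} (h : x ∈ Icc xmin xmax) : |x| ≤ max |xmin| |xmax| := by
  rw [abs_le]
  constructor
  · calc -(max |xmin| |xmax|) ≤ -|xmin| := neg_le_neg (le_max_left _ _)
      _ ≤ xmin := neg_abs_le xmin
      _ ≤ x := h.1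
  · calc x ≤ xmax := h.2
      _ ≤ |xmax| := le_abs_self xmax
      _ ≤ max |xmin| |xmax| := le_max_right _ _

lemma integrable_poly [IsProbabilityMeasure π]
    (haeu : ∀ᵐ p ∂π, p.1 ∈ Icc xmin xmax) (haev : ∀ᵐ p ∂π, p.2 ∈ Icc xmin xmax)
    {g : ℝ × ℝ → ℝ} (hgm : Continuous g) {C : ℝ}
    (hb : ∀ p : ℝ × ℝ, p.1 ∈ Icc xmin xmax → p.2 ∈ Icc xmin xmax → ‖g p‖ ≤ C) :
    Integrable g π := by
  refine ⟨hgm.aestronglyMeasurable, HasFiniteIntegral.of_bounded (C := C) ?_⟩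
  filter_upwards [haeu, haev] with p h1 h2
  exact hb p h1 h2

lemma integral_fst_eq [IsProbabilityMeasure π] (h1 : π.map Prod.fst = u) {f : ℝ → ℝ}
    (hf : Continuous f) : ∫ p, f p.1 ∂π = ∫ x, f x ∂u := by
  rw [← h1, integral_map measurable_fst.aemeasurable hf.aestronglyMeasurable]

lemma integral_snd_eq [IsProbabilityMeasure π] (h2 : π.map Prod.snd = v) {f : ℝ → ℝ}
    (hf : Continuous f) : ∫ p, f p.2 ∂π = ∫ x, f x ∂v := by
  rw [← h2, integral_map measurable_snd.aemeasurable hf.aestronglyMeasurable]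

lemma crossC_lt_top [IsProbabilityMeasure π]
    (haeu : ∀ᵐ p ∂π, p.1 ∈ Icc xmin xmax) (haev : ∀ᵐ p ∂π, p.2 ∈ Icc xmin xmax) :
    ∫⁻ p, ENNReal.ofReal ((p.1 - xmin) * (p.2 - xmin)) ∂π ≠ ⊤ := by
  have hle : ∫⁻ p, ENNReal.ofReal ((p.1 - xmin) * (p.2 - xmin)) ∂π
      ≤ ∫⁻ _, ENNReal.ofReal ((xmax - xmin) * (xmax - xmin)) ∂π := by
    refine lintegral_mono_ae ?_
    filter_upwards [haeu, haev] with p h1 h2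
    refine ENNReal.ofReal_le_ofReal ?_
    have := h1.1; have := h1.2; have := h2.1; have := h2.2
    nlinarith
  refine ne_top_of_le_ne_top ?_ hle
  rw [lintegral_const, measure_univ, mul_one]
  exact ENNReal.ofReal_ne_top

lemma cross_shift_eq [IsProbabilityMeasure π]
    (haeu : ∀ᵐ p ∂π, p.1 ∈ Icc xmin xmax) (haev : ∀ᵐ p ∂π, p.2 ∈ Icc xmin xmax) :
    ∫ p, (p.1 - xmin) * (p.2 - xmin) ∂π
      = (∫⁻ p, ENNReal.ofReal ((p.1 - xmin) * (p.2 - xmin)) ∂π).toReal := by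
  refine integral_eq_lintegral_of_nonneg_ae ?_ ?_
  · filter_upwards [haeu, haev] with p h1 h2
    simp only [Pi.zero_apply]
    have := h1.1; have := h2.1
    nlinarith
  · exact ((continuous_fst.sub continuous_const).mul
      (continuous_snd.sub continuous_const)).aestronglyMeasurable

lemma shift_expand [IsProbabilityMeasure π] (h1 : π.map Prod.fst = u) (h2 : π.map Prod.snd = v)
    (haeu : ∀ᵐ p ∂π, p.1 ∈ Icc xmin xmax) (haev : ∀ᵐ p ∂π, p.2 ∈ Icc xmin xmax) :
    ∫ p, (p.1 - xmin) * (p.2 - xmin) ∂π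
      = ∫ p, p.1 * p.2 ∂π - xmin * ∫ x, x ∂u - xmin * ∫ x, x ∂v + xmin * xmin := by
  set B := max |xmin| |xmax| with hB
  have hBnn : 0 ≤ B := le_trans (abs_nonneg _) (le_max_left _ _)
  have hi1 : Integrable (fun p : ℝ × ℝ => p.1 * p.2) π := by
    refine integrable_poly haeu haev (continuous_fst.mul continuous_snd) (C := B * B) ?_
    intro p hp1 hp2
    rw [Real.norm_eq_abs, abs_mul]
    exact mul_le_mul (abs_le_B hp1) (abs_le_B hp2) (abs_nonneg _) hBnn
  have hi2 : Integrable (fun p : ℝ × ℝ => p.1) π := by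
    refine integrable_poly haeu haev continuous_fst (C := B) ?_
    intro p hp1 _; exact abs_le_B hp1
  have hi3 : Integrable (fun p : ℝ × ℝ => p.2) π := by
    refine integrable_poly haeu haev continuous_snd (C := B) ?_
    intro p _ hp2; exact abs_le_B hp2
  have hkey : ∀ p : ℝ × ℝ, (p.1 - xmin) * (p.2 - xmin)
      = p.1 * p.2 - xmin * p.1 - xmin * p.2 + xmin * xmin := fun p => by ring
  have hiA : Integrable (fun p : ℝ × ℝ => p.1 * p.2 - xmin * p.1) π :=
    hi1.sub (hi2.const_mul xmin)
  have hiB : Integrable (fun p : ℝ × ℝ => p.1 * p.2 - xmin * p.1 - xmin * p.2) π :=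
    hiA.sub (hi3.const_mul xmin)
  simp only [hkey]
  rw [integral_add hiB (integrable_const _), integral_sub hiA (hi3.const_mul xmin),
    integral_sub hi1 (hi2.const_mul xmin), integral_const, probReal_univ,
    integral_const_mul, integral_const_mul,
    integral_fst_eq (f := fun x => x) h1 continuous_id, integral_snd_eq (f := fun x => x) h2 continuous_id]
  simp

lemma sq_expand [IsProbabilityMeasure π] (h1 : π.map Prod.fst = u) (h2 : π.map Prod.snd = v)
    (haeu : ∀ᵐ p ∂π, p.1 ∈ Icc xmin xmax) (haev : ∀ᵐ p ∂π, p.2 ∈ Icc xmin xmax) :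
    ∫ p, (p.1 - p.2) ^ 2 ∂π
      = ∫ x, x ^ 2 ∂u + ∫ x, x ^ 2 ∂v - 2 * ∫ p, p.1 * p.2 ∂π := by
  set B := max |xmin| |xmax| with hB
  have hBnn : 0 ≤ B := le_trans (abs_nonneg _) (le_max_left _ _)
  have habs : ∀ x ∈ Icc xmin xmax, ‖x ^ 2‖ ≤ B * B := by
    intro x hxm
    rw [Real.norm_eq_abs, pow_two, abs_mul]
    exact mul_le_mul (abs_le_B hxm) (abs_le_B hxm) (abs_nonneg _) hBnn
  have hi1 : Integrable (fun p : ℝ × ℝ => p.1 * p.2) π := by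
    refine integrable_poly haeu haev (continuous_fst.mul continuous_snd) (C := B * B) ?_
    intro p hp1 hp2
    rw [Real.norm_eq_abs, abs_mul]
    exact mul_le_mul (abs_le_B hp1) (abs_le_B hp2) (abs_nonneg _) hBnn
  have hi2 : Integrable (fun p : ℝ × ℝ => p.1 ^ 2) π :=
    integrable_poly haeu haev (continuous_fst.pow 2) (C := B * B)
      (fun p hp1 _ => habs p.1 hp1)
  have hi3 : Integrable (fun p : ℝ × ℝ => p.2 ^ 2) π :=
    integrable_poly haeu haev (continuous_snd.pow 2) (C := B * B)
      (fun p _ hp2 => habs p.2 hp2)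
  have hkey : ∀ p : ℝ × ℝ, (p.1 - p.2) ^ 2
      = p.1 ^ 2 + p.2 ^ 2 - 2 * (p.1 * p.2) := fun p => by ring
  have hiA : Integrable (fun p : ℝ × ℝ => p.1 ^ 2 + p.2 ^ 2) π := hi2.add hi3
  simp only [hkey]
  rw [integral_sub hiA (hi1.const_mul 2), integral_add hi2 hi3,
    integral_const_mul, integral_fst_eq h1 (continuous_pow 2),
    integral_snd_eq h2 (continuous_pow 2)]

end Compare


section Main

variable {π : Measure (ℝ × ℝ)} {v : Measure ℝ}

lemma map_T_fst (hx : xmin ≤ xmax) (hu : memP2 xmin xmax u) (hv : memP2 xmin xmax v) :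
    (Leb01.map (fun r => (Q xmin xmax u r, Q xmin xmax v r))).map Prod.fst = u := by
  rw [Measure.map_map measurable_fst ((Q_measurable hx hu).prodMk (Q_measurable hx hv))]
  exact map_Q hx hu

lemma map_T_snd (hx : xmin ≤ xmax) (hu : memP2 xmin xmax u) (hv : memP2 xmin xmax v) :
    (Leb01.map (fun r => (Q xmin xmax u r, Q xmin xmax v r))).map Prod.snd = v := by
  rw [Measure.map_map measurable_snd ((Q_measurable hx hu).prodMk (Q_measurable hx hv))]
  exact map_Q hx hv

lemma integral_sq_compare (hx : xmin ≤ xmax) (hu : memP2 xmin xmax u) (hv : memP2 xmin xmax v)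
    [IsProbabilityMeasure π] (h1 : π.map Prod.fst = u) (h2 : π.map Prod.snd = v) :
    ∫ p, (p.1 - p.2) ^ 2 ∂(Leb01.map (fun r => (Q xmin xmax u r, Q xmin xmax v r)))
      ≤ ∫ p, (p.1 - p.2) ^ 2 ∂π := by
  have hTm : Measurable (fun r => (Q xmin xmax u r, Q xmin xmax v r)) :=
    (Q_measurable hx hu).prodMk (Q_measurable hx hv)
  set σ := Leb01.map (fun r => (Q xmin xmax u r, Q xmin xmax v r)) with hσdef
  haveI : IsProbabilityMeasure σ := Measure.isProbabilityMeasure_map hTm.aemeasurable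
  have hσ1 : σ.map Prod.fst = u := map_T_fst hx hu hv
  have hσ2 : σ.map Prod.snd = v := map_T_snd hx hu hv
  have haeπu : ∀ᵐ p ∂π, p.1 ∈ Icc xmin xmax := ae_fst_mem hu h1
  have haeπv : ∀ᵐ p ∂π, p.2 ∈ Icc xmin xmax := ae_snd_mem hv h2
  have haeσu : ∀ᵐ p ∂σ, p.1 ∈ Icc xmin xmax := ae_fst_mem hu hσ1
  have haeσv : ∀ᵐ p ∂σ, p.2 ∈ Icc xmin xmax := ae_snd_mem hv hσ2
  have hCle : ∫⁻ p, ENNReal.ofReal ((p.1 - xmin) * (p.2 - xmin)) ∂π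
      ≤ ∫⁻ p, ENNReal.ofReal ((p.1 - xmin) * (p.2 - xmin)) ∂σ := by
    rw [CC_eq (by filter_upwards [haeπu, haeπv] with p ha hb; exact ⟨ha.1, hb.1⟩),
      CC_eq (by filter_upwards [haeσu, haeσv] with p ha hb; exact ⟨ha.1, hb.1⟩)]
    refine lintegral_mono (fun q => ?_)
    rw [hσdef, section_eq hx hu hv q.1 q.2]
    exact section_le ‹_› h1 h2 q.1 q.2
  have hfin : ∫⁻ p, ENNReal.ofReal ((p.1 - xmin) * (p.2 - xmin)) ∂σ ≠ ⊤ :=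
    crossC_lt_top haeσu haeσv
  have hcross : ∫ p, p.1 * p.2 ∂π ≤ ∫ p, p.1 * p.2 ∂σ := by
    have h := ENNReal.toReal_mono hfin hCle
    rw [← cross_shift_eq haeπu haeπv, ← cross_shift_eq haeσu haeσv,
      shift_expand h1 h2 haeπu haeπv, shift_expand hσ1 hσ2 haeσu haeσv] at h
    linarith
  rw [sq_expand h1 h2 haeπu haeπv, sq_expand hσ1 hσ2 haeσu haeσv]
  linarith

end Main

end Stmt19Aux

open Stmt19Aux

/-- There is an exponential map Exp_w, defined on
O_w = {f : icdf_w + f is the quantile function of some measure in P₂(Ω)}, which is a bijection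
onto P₂(Ω) with inverse Log_w(u) = icdf_u − icdf_w; moreover
W₂(u,v) = ‖Log_w u − Log_w v‖_{L²([0,1])} for all u,v ∈ P₂(Ω). -/
theorem stmt19 (xmin xmax : ℝ) (hx : xmin < xmax) (w : Measure ℝ)
    (hw : memP2 xmin xmax w) :
    (∃ E : (ℝ → ℝ) → Measure ℝ,
      (∀ f ∈ {f : ℝ → ℝ | ∃ u : Measure ℝ, memP2 xmin xmax u ∧
          ∀ s ∈ Ioo (0 : ℝ) 1, icdf w s + f s = icdf u s},
        memP2 xmin xmax (E f) ∧ ∀ s ∈ Ioo (0 : ℝ) 1, icdf (E f) s - icdf w s = f s) ∧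
      (∀ u : Measure ℝ, memP2 xmin xmax u → E (fun s => icdf u s - icdf w s) = u)) ∧
    (∀ u v : Measure ℝ, memP2 xmin xmax u → memP2 xmin xmax v →
      W2 u v = (∫ s in Ioo (0 : ℝ) 1,
        ((icdf u s - icdf w s) - (icdf v s - icdf w s)) ^ 2) ^ (1 / 2 : ℝ)) := by
  have h01 : ∀ᵐ s ∂Leb01, s ∈ Ioo (0:ℝ) 1 := ae_restrict_mem measurableSet_Ioo
  constructor
  · refine ⟨fun f => Leb01.map (fun s => icdf w s + f s), ?_, ?_⟩
    · rintro f ⟨u, hu, hf⟩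
      dsimp only
      have hE : Leb01.map (fun s => icdf w s + f s) = u := by
        have hae : (fun s => icdf w s + f s) =ᵐ[Leb01] Q xmin xmax u := by
          filter_upwards [h01] with s hs
          rw [hf s hs, Q_eq_icdf hs]
        rw [Measure.map_congr hae, map_Q hx.le hu]
      rw [hE]
      exact ⟨hu, fun s hs => by have := hf s hs; linarith⟩
    · intro u hu
      dsimp only
      have hfun : (fun s => icdf w s + (icdf u s - icdf w s)) = fun s => icdf u s := by
        funext s; ring
      rw [hfun]
      have hae : (fun s => icdf u s) =ᵐ[Leb01] Q xmin xmax u := by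
        filter_upwards [h01] with s hs
        rw [Q_eq_icdf hs]
      rw [Measure.map_congr hae, map_Q hx.le hu]
  · intro u v hu hv
    have hTm : Measurable (fun r => (Q xmin xmax u r, Q xmin xmax v r)) :=
      (Q_measurable hx.le hu).prodMk (Q_measurable hx.le hv)
    set σ := Leb01.map (fun r => (Q xmin xmax u r, Q xmin xmax v r)) with hσdef
    haveI : IsProbabilityMeasure σ := Measure.isProbabilityMeasure_map hTm.aemeasurable
    have hσ1 : σ.map Prod.fst = u := map_T_fst hx.le hu hv
    have hσ2 : σ.map Prod.snd = v := map_T_snd hx.le hu hv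
    have hval : ∫ p, (p.1 - p.2) ^ 2 ∂σ = ∫ s in Ioo (0 : ℝ) 1,
        ((icdf u s - icdf w s) - (icdf v s - icdf w s)) ^ 2 := by
      rw [hσdef, integral_map hTm.aemeasurable
        (Continuous.aestronglyMeasurable (by fun_prop))]
      rw [show (Leb01 : Measure ℝ) = volume.restrict (Ioo (0:ℝ) 1) from rfl]
      refine setIntegral_congr_fun measurableSet_Ioo (fun s hs => ?_)
      rw [Q_eq_icdf hs, Q_eq_icdf hs]; ring
    have hR0 : (0:ℝ) ≤ ∫ s in Ioo (0 : ℝ) 1,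
        ((icdf u s - icdf w s) - (icdf v s - icdf w s)) ^ 2 :=
      integral_nonneg (fun s => sq_nonneg _)
    rw [W2]
    refine le_antisymm (csInf_le ?_ ?_) (le_csInf ?_ ?_)
    · refine ⟨0, fun r hr => ?_⟩
      obtain ⟨π, hπ, hm1, hm2, rfl⟩ := hr
      exact Real.rpow_nonneg (integral_nonneg (fun p => sq_nonneg _)) _
    · exact ⟨σ, ‹_›, hσ1, hσ2, by rw [hval]⟩
    · exact ⟨_, σ, ‹_›, hσ1, hσ2, rfl⟩
    · rintro r ⟨π, hπ, hm1, hm2, rfl⟩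
      haveI := hπ
      refine Real.rpow_le_rpow hR0 ?_ (by norm_num)
      rw [← hval]
      exact integral_sq_compare hx.le hu hv hm1 hm2
end
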